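/- arXiv:1411.0243 — 2 statements merged into one kernel-verified Lean document; each statement's English description precedes it below -/
import Mathlib

section
/- Let Ξ be an n×n random matrix whose entries are iid uniform on {+1, −1}. Then P(det(Ξ) = 0) = O(n^{−1/2}). -/
open scoped Classical
open Finset

set_option maxHeartbeats 1000000
noncomputable section

/-- The real `±1` matrix associated to a Boolean matrix (`true ↦ +1`, `false ↦ -1`). -/
def sgn2r {n : ℕ} (A : Matrix (Fin n) (Fin n) Bool) : Matrix (Fin n) (Fin n) ℝ :=
  Matrix.of fun i j => if A i j then (1 : ℝ) else -1

/-- Probability of the event `p` for a uniform random element of the finite set `s`. -/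
def cprob {α : Type*} [Fintype α] (s : Finset α) (p : α → Prop) : ℝ :=
  ((s.filter p).card : ℝ) / (s.card : ℝ)

def sv {ι : Type*} (w : ι → Bool) : ι → ℝ := fun i => if w i then 1 else -1

lemma sv_apply_ne {ι : Type*} (w : ι → Bool) (i : ι) : sv w i = 1 ∨ sv w i = -1 := by
  unfold sv; by_cases h : w i <;> simp [h]

lemma sv_injective {ι : Type*} : Function.Injective (sv (ι := ι)) := by
  intro w w' h
  funext i
  have := congrFun h i
  unfold sv at this
  by_cases h1 : w i <;> by_cases h2 : w' i <;> simp [h1, h2] at this ⊢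
  · norm_num at this
  · norm_num at this

/-- Pivot lemma: columns of an `m × ι` matrix admit a "pivot set" `S` of size `≤ m` such that
every coordinate of any vector in the row span is a fixed linear function of the
`S`-coordinates, with the corresponding column relation. -/
lemma exists_pivot {ι : Type*} [Fintype ι] {m : ℕ} (B : Fin m → ι → ℝ) :
    ∃ S : Finset ι, S.card ≤ m ∧ ∀ j : ι, ∃ c : ι → ℝ,
      (∀ i, c i ≠ 0 → i ∈ S) ∧
      (∀ v ∈ Submodule.span ℝ (Set.range B), v j = ∑ i, c i * v i) ∧
      ((fun a => B a j) ∈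
        Submodule.span ℝ ((fun l => (fun a => B a l)) '' {i | c i ≠ 0})) := by
  classical
  cases isEmpty_or_nonempty ι
  · exact ⟨∅, by simp, fun j => isEmptyElim j⟩
  set g : ι → (Fin m → ℝ) := fun l => (fun a => B a l) with hg
  obtain ⟨t, hts, hspan, hind⟩ := exists_linearIndependent ℝ (Set.range g)
  have ht : t.Finite := (Set.finite_range g).subset hts
  -- a section of g on t
  have hsec : ∀ u ∈ t, ∃ i, g i = u := by
    intro u hu; exact hts hu
  set ρ : (Fin m → ℝ) → ι := fun u => if h : ∃ i, g i = u then h.choose else Classical.arbitrary ι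
    with hρ
  have hρg : ∀ u ∈ t, g (ρ u) = u := by
    intro u hu
    have h : ∃ i, g i = u := hsec u hu
    simp only [hρ, dif_pos h]
    exact h.choose_spec
  set S : Finset ι := ht.toFinset.image ρ with hS
  have hcard : S.card ≤ m := by
    have h1 : S.card ≤ ht.toFinset.card := Finset.card_image_le
    have h2 : ht.toFinset.card ≤ Module.finrank ℝ (Fin m → ℝ) := by
      apply LinearIndependent.finset_card_le_finrank
      exact hind.comp (fun x => (⟨x.1, ht.mem_toFinset.mp x.2⟩ : t))
        (fun a b h => Subtype.ext (congrArg Subtype.val h : (a:Fin m → ℝ) = b))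
    rw [Module.finrank_fintype_fun_eq_card, Fintype.card_fin] at h2
    omega
  refine ⟨S, hcard, fun j => ?_⟩
  -- g j ∈ span t
  have hgj : g j ∈ Submodule.span ℝ t := by
    rw [hspan]; exact Submodule.subset_span ⟨j, rfl⟩
  obtain ⟨l, hlsupp, hlsum⟩ := Submodule.mem_span_set.mp hgj
  set Simg : Finset ι := l.support.image ρ with hSimg
  set c : ι → ℝ := fun i => if i ∈ Simg then l (g i) else 0 with hc
  have hρinj : ∀ u ∈ l.support, ∀ u' ∈ l.support, ρ u = ρ u' → u = u' := by
    intro u hu u' hu' h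
    have h1 := hρg u (hlsupp hu)
    have h2 := hρg u' (hlsupp hu')
    rw [← h1, ← h2, h]
  have hginv : ∀ u ∈ l.support, g (ρ u) = u := fun u hu => hρg u (hlsupp hu)
  have hcval : ∀ u ∈ l.support, c (ρ u) = l u := by
    intro u hu
    have : ρ u ∈ Simg := Finset.mem_image_of_mem ρ hu
    simp only [hc, if_pos this, hginv u hu]
  have hcne : ∀ i ∈ Simg, c i ≠ 0 := by
    intro i hi
    obtain ⟨u, hu, rfl⟩ := Finset.mem_image.mp hi
    rw [hcval u hu]
    exact Finsupp.mem_support_iff.mp hu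
  have hczero : ∀ i, c i ≠ 0 → i ∈ Simg := by
    intro i h
    by_contra hi
    simp only [hc, if_neg hi] at h
    exact h rfl
  have hSimgS : Simg ⊆ S := by
    intro i hi
    obtain ⟨u, hu, rfl⟩ := Finset.mem_image.mp hi
    exact Finset.mem_image_of_mem ρ (ht.mem_toFinset.mpr (hlsupp hu))
  -- key sum identity: g j = ∑ i in Simg, c i • g i
  have hkey : g j = ∑ i ∈ Simg, c i • g i := by
    rw [← hlsum, Finsupp.sum]
    rw [Finset.sum_image (fun u hu u' hu' h => hρinj u hu u' hu' h)]
    apply Finset.sum_congr rfl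
    intro u hu
    rw [hcval u hu, hginv u hu]
  refine ⟨c, fun i h => hSimgS (hczero i h), ?_, ?_⟩
  · intro v hv
    obtain ⟨z, hz⟩ := (Submodule.mem_span_range_iff_exists_fun ℝ).mp hv
    have hvi : ∀ i, v i = ∑ a, z a * B a i := by
      intro i
      rw [← hz]
      simp [Finset.sum_apply]
    have hgji : ∀ a : Fin m, B a j = ∑ i ∈ Simg, c i * B a i := by
      intro a
      have := congrFun hkey a
      simpa [Finset.sum_apply] using this
    rw [hvi j]
    calc ∑ a, z a * B a j = ∑ a, z a * ∑ i ∈ Simg, c i * B a i := by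
          apply Finset.sum_congr rfl; intro a _; rw [hgji a]
      _ = ∑ a, ∑ i ∈ Simg, z a * (c i * B a i) := by
          apply Finset.sum_congr rfl; intro a _; rw [Finset.mul_sum]
      _ = ∑ i ∈ Simg, ∑ a, z a * (c i * B a i) := Finset.sum_comm
      _ = ∑ i ∈ Simg, c i * ∑ a, z a * B a i := by
          apply Finset.sum_congr rfl; intro i _
          rw [Finset.mul_sum]; apply Finset.sum_congr rfl; intro a _; ring
      _ = ∑ i ∈ Simg, c i * v i := by
          apply Finset.sum_congr rfl; intro i _; rw [hvi i]
      _ = ∑ i, c i * v i := by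
          apply Finset.sum_subset (Finset.subset_univ _)
          intro i _ hi
          simp only [hc, if_neg hi, zero_mul]
  · show g j ∈ _
    rw [hkey]
    apply Submodule.sum_mem
    intro i hi
    apply Submodule.smul_mem
    apply Submodule.subset_span
    exact ⟨i, hcne i hi, rfl⟩
section Part2
open Finset

variable {Ω A B : Type*}

lemma card_filter_equiv {α β : Type*} [Fintype α] [Fintype β] (e : α ≃ β) (P : β → Prop) :
    ((univ : Finset α).filter (fun x => P (e x))).card = ((univ : Finset β).filter P).card := by
  classical
  apply Finset.card_bij (fun x _ => e x)
  · intro a ha; simp only [mem_filter, mem_univ, true_and] at ha ⊢; exact ha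
  · intro a _ b _ h; exact e.injective h
  · intro b hb; exact ⟨e.symm b, by simpa using (mem_filter.mp hb).2, (e.apply_symm_apply b)⟩

lemma card_filter_fst {A B : Type*} [Fintype A] [Fintype B] (P : A → Prop) :
    ((univ : Finset (A × B)).filter (fun p => P p.1)).card
      = ((univ : Finset A).filter P).card * Fintype.card B := by
  classical
  have : ((univ : Finset (A × B)).filter (fun p => P p.1))
      = ((univ : Finset A).filter P) ×ˢ (univ : Finset B) := by
    ext p; simp [Finset.mem_product]
  rw [this, Finset.card_product, Finset.card_univ]

lemma card_filter_univ_congr {α : Type*} {F1 F2 : Fintype α} (p : α → Prop)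
    {D1 D2 : DecidablePred p} :
    (@Finset.filter α p D1 (@Finset.univ α F1)).card
      = (@Finset.filter α p D2 (@Finset.univ α F2)).card := by
  have h1 : F1 = F2 := Subsingleton.elim _ _
  subst h1
  have h2 : D1 = D2 := Subsingleton.elim _ _
  subst h2
  rfl

/-- Master fiber-counting lemma. -/
lemma master_count [Fintype Ω] [Fintype A] [Fintype B]
    (e : Ω ≃ A × B) (E : Ω → Prop) (Q : B → Prop) (R : B → A → Prop)
    (hE : ∀ ω, E ω → Q (e ω).2 ∧ R (e ω).2 (e ω).1)
    (M : ℝ) (hM0 : 0 ≤ M)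
    (hM : ∀ y, Q y → (((univ : Finset A).filter (R y)).card : ℝ) ≤ M) :
    (((univ : Finset Ω).filter E).card : ℝ) ≤ (Fintype.card B) * M := by
  classical
  have step1 : ((univ : Finset Ω).filter E).card
      ≤ ((univ : Finset (A × B)).filter (fun p => Q p.2 ∧ R p.2 p.1)).card := by
    apply Finset.card_le_card_of_injOn (fun ω => e ω)
    · intro ω hω
      simp only [mem_coe, mem_filter, mem_univ, true_and] at hω ⊢
      exact hE ω hω
    · intro a _ b _ h; exact e.injective h
  have step2 : ((univ : Finset (A × B)).filter (fun p => Q p.2 ∧ R p.2 p.1)).card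
      = ∑ y : B, ((univ : Finset A).filter (fun x => Q y ∧ R y x)).card := by
    rw [Finset.card_eq_sum_card_fiberwise (f := Prod.snd) (t := univ) (fun x _ => mem_univ _)]
    apply Finset.sum_congr rfl
    intro y _
    apply Finset.card_bij (fun p _ => p.1)
    · intro p hp
      simp only [mem_filter, mem_univ, true_and] at hp ⊢
      obtain ⟨⟨hq, hr⟩, h2⟩ := hp
      subst h2
      exact ⟨hq, hr⟩
    · intro p hp q hq h
      simp only [mem_filter] at hp hq
      exact Prod.ext h (hp.2.trans hq.2.symm)
    · intro x hx
      simp only [mem_filter, mem_univ, true_and] at hx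
      exact ⟨(x, y), by simp [hx.1, hx.2], rfl⟩
  have step3 : ∀ y : B, (((univ : Finset A).filter (fun x => Q y ∧ R y x)).card : ℝ) ≤ M := by
    intro y
    by_cases hy : Q y
    · calc (((univ : Finset A).filter (fun x => Q y ∧ R y x)).card : ℝ)
          ≤ (((univ : Finset A).filter (R y)).card : ℝ) := by
            apply Nat.cast_le.mpr
            apply Finset.card_le_card
            intro x hx
            simp only [mem_filter] at hx ⊢
            exact ⟨hx.1, hx.2.2⟩
        _ ≤ M := hM y hy
    · have : ((univ : Finset A).filter (fun x => Q y ∧ R y x)) = ∅ := by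
        apply Finset.filter_false_of_mem; intro x _ h; exact hy h.1
      rw [this]; simpa using hM0
  calc (((univ : Finset Ω).filter E).card : ℝ)
      ≤ (((univ : Finset (A × B)).filter (fun p => Q p.2 ∧ R p.2 p.1)).card : ℝ) := by
        exact_mod_cast step1
    _ = ∑ y : B, (((univ : Finset A).filter (fun x => Q y ∧ R y x)).card : ℝ) := by
        rw [step2]; push_cast; rfl
    _ ≤ ∑ _y : B, M := Finset.sum_le_sum (fun y _ => step3 y)
    _ = (Fintype.card B) * M := by rw [Finset.sum_const, Finset.card_univ, nsmul_eq_mul]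

/-- Split a boolean matrix into (row k, other rows). -/
def rowSplit {n : ℕ} (k : Fin n) :
    (Matrix (Fin n) (Fin n) Bool) ≃ (Fin n → Bool) × ({j : Fin n // j ≠ k} → Fin n → Bool) where
  toFun A := (A k, fun j => A j.1)
  invFun p := fun i => if h : i = k then p.1 else p.2 ⟨i, h⟩
  left_inv A := by funext i; by_cases h : i = k <;> simp [h]
  right_inv p := by
    refine Prod.ext (by simp) ?_
    funext j l
    simp [j.2]

/-- Split a boolean matrix into (column j0, other columns). -/
def colSplit {n : ℕ} (j0 : Fin n) :
    (Matrix (Fin n) (Fin n) Bool) ≃ (Fin n → Bool) × (Fin n → {j : Fin n // j ≠ j0} → Bool) where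
  toFun A := (fun i => A i j0, fun i j => A i j.1)
  invFun p := fun i j => if h : j = j0 then p.1 i else p.2 i ⟨j, h⟩
  left_inv A := by funext i j; by_cases h : j = j0 <;> simp [h]
  right_inv p := by
    refine Prod.ext (by simp) ?_
    funext i j
    simp [j.2]

/-- Split a boolean vector into (first k entries, rest). -/
def prefSplit {n k : ℕ} (hk : k ≤ n) :
    (Fin n → Bool) ≃ (Fin k → Bool) × ({j : Fin n // ¬ (j : ℕ) < k} → Bool) where
  toFun x := (fun i => x (Fin.castLE hk i), fun j => x j.1)
  invFun p := fun j => if h : (j : ℕ) < k then p.1 ⟨j, h⟩ else p.2 ⟨j, h⟩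
  left_inv x := by
    funext j
    by_cases h : (j : ℕ) < k
    · simp only [dif_pos h]
      congr 1
    · simp only [dif_neg h]
  right_inv p := by
    refine Prod.ext ?_ ?_
    · funext i
      have h : ((Fin.castLE hk i : Fin n) : ℕ) < k := i.isLt
      simp only [dif_pos h]
      congr 1
    · funext j
      simp only [dif_neg j.2]

/-- Odlyzko-type counting: boolean vectors whose sign vector lies in the span of `m`
given vectors number at most `2^m`. -/
lemma odlyzko_count {ι : Type*} [Fintype ι] {m : ℕ} (B : Fin m → ι → ℝ) :
    (((univ : Finset (ι → Bool))).filter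
        (fun w => sv w ∈ Submodule.span ℝ (Set.range B))).card ≤ 2 ^ m := by
  classical
  obtain ⟨S, hScard, hS⟩ := exists_pivot B
  have hinj : Set.InjOn (fun w : ι → Bool => (fun i : {x // x ∈ S} => w i.1))
      ((univ : Finset (ι → Bool)).filter
        (fun w => sv w ∈ Submodule.span ℝ (Set.range B)) : Finset (ι → Bool)) := by
    intro w hw w' hw' h
    simp only [coe_filter, Set.mem_setOf_eq, mem_univ, true_and] at hw hw'
    apply sv_injective
    funext j
    obtain ⟨c, hcS, hcv, -⟩ := hS j
    rw [hcv _ hw, hcv _ hw']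
    apply Finset.sum_congr rfl
    intro i _
    by_cases hci : c i = 0
    · rw [hci]; ring
    · have hiS := hcS i hci
      have : w i = w' i := congrFun h ⟨i, hiS⟩
      unfold sv
      rw [this]
  have hcount := Finset.card_le_card_of_injOn _ (fun w _ => Finset.mem_univ
    ((fun i : {x // x ∈ S} => w i.1))) hinj
  calc _ ≤ (univ : Finset ({x // x ∈ S} → Bool)).card := hcount
    _ = 2 ^ S.card := by
        rw [Finset.card_univ]
        rw [Fintype.card_fun]
        simp [Fintype.card_coe]
    _ ≤ 2 ^ m := Nat.pow_le_pow_right (by norm_num) hScard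

end Part2
section Part3
open Finset

/-- Kernel Littlewood–Offord bound via Sperner. -/
lemma lo_count_core {ι : Type*} [Fintype ι] (c : ι → ℝ) (hc : ∀ i, c i ≠ 0) (r : ℝ) :
    (((univ : Finset (ι → Bool))).filter (fun w => ∑ i, c i * sv w i = r)).card
      ≤ (Fintype.card ι).choose (Fintype.card ι / 2) := by
  classical
  set φ : (ι → Bool) → Finset ι := fun w => univ.filter (fun i => 0 < c i * sv w i) with hφ
  have hmem : ∀ w i, i ∈ φ w ↔ 0 < c i * sv w i := by
    intro w i; simp [hφ]
  have hval : ∀ (w : ι → Bool) i, c i * sv w i = c i ∨ c i * sv w i = -c i := by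
    intro w i
    rcases sv_apply_ne w i with h | h <;> rw [h] <;> [left; right] <;> ring
  have hφinj : Function.Injective φ := by
    intro w w' h
    funext i
    have hiff : (0 < c i * sv w i) ↔ (0 < c i * sv w' i) := by
      rw [← hmem, ← hmem, h]
    rcases sv_apply_ne w i with h1 | h1 <;> rcases sv_apply_ne w' i with h2 | h2
    · -- both sv = 1 : w i = w' i = true
      unfold sv at h1 h2
      by_cases hw : w i <;> by_cases hw' : w' i <;> simp [hw, hw'] at h1 h2 ⊢ <;> linarith
    · exfalso
      rw [h1, h2] at hiff
      rcases (hc i).lt_or_gt with hlt | hlt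
      · have h3 : (0:ℝ) < c i * -1 := by nlinarith
        have h4 := hiff.mpr h3
        nlinarith
      · have h3 : (0:ℝ) < c i * 1 := by nlinarith
        have h4 := hiff.mp h3
        nlinarith
    · exfalso
      rw [h1, h2] at hiff
      rcases (hc i).lt_or_gt with hlt | hlt
      · have h3 : (0:ℝ) < c i * -1 := by nlinarith
        have h4 := hiff.mp h3
        nlinarith
      · have h3 : (0:ℝ) < c i * 1 := by nlinarith
        have h4 := hiff.mpr h3
        nlinarith
    · unfold sv at h1 h2
      by_cases hw : w i <;> by_cases hw' : w' i <;> simp [hw, hw'] at h1 h2 ⊢ <;> linarith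
  set L := ((univ : Finset (ι → Bool))).filter (fun w => ∑ i, c i * sv w i = r) with hL
  set 𝒜 : Finset (Finset ι) := L.image φ with h𝒜
  have hanti : IsAntichain (· ⊆ ·) (𝒜 : Set (Finset ι)) := by
    intro a ha b hb hne hsub
    simp only [h𝒜, coe_image, Set.mem_image, mem_coe, hL, mem_filter, mem_univ, true_and] at ha hb
    obtain ⟨w, hw, rfl⟩ := ha
    obtain ⟨w', hw', rfl⟩ := hb
    have hss : φ w ⊂ φ w' := ⟨hsub, fun hba => hne (Finset.Subset.antisymm hsub hba ▸ rfl)⟩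
    obtain ⟨i0, hi0b, hi0a⟩ := Finset.exists_of_ssubset hss
    have hterm : ∀ i, c i * sv w i ≤ c i * sv w' i := by
      intro i
      by_cases hia : i ∈ φ w
      · have hib : i ∈ φ w' := hsub hia
        rw [hmem] at hia hib
        rcases hval w i with h1 | h1 <;> rcases hval w' i with h2 | h2 <;>
          rw [h1] at hia ⊢ <;> rw [h2] at hib ⊢ <;> linarith
      · have hia' : ¬ 0 < c i * sv w i := by rwa [hmem] at hia
        by_cases hib : i ∈ φ w'
        · rw [hmem] at hib; linarith [not_lt.mp hia']
        · have hib' : ¬ 0 < c i * sv w' i := by rwa [hmem] at hib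
          rcases hval w i with h1 | h1 <;> rcases hval w' i with h2 | h2 <;>
            rw [h1] at hia' ⊢ <;> rw [h2] at hib' ⊢ <;>
            rcases (hc i).lt_or_gt with hlt | hlt <;> linarith [not_lt.mp hia', not_lt.mp hib']
    have hstrict : c i0 * sv w i0 < c i0 * sv w' i0 := by
      have hia' : ¬ 0 < c i0 * sv w i0 := by rwa [hmem] at hi0a
      have hib : 0 < c i0 * sv w' i0 := by rwa [hmem] at hi0b
      linarith [not_lt.mp hia']
    have : ∑ i, c i * sv w i < ∑ i, c i * sv w' i :=
      Finset.sum_lt_sum (fun i _ => hterm i) ⟨i0, Finset.mem_univ _, hstrict⟩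
    rw [hw, hw'] at this
    exact lt_irrefl r this
  have hcard : L.card = 𝒜.card := by
    rw [h𝒜, Finset.card_image_of_injective _ hφinj]
  rw [hcard]
  exact IsAntichain.sperner hanti

/-- Littlewood–Offord counting over the whole cube, in terms of the support size. -/
lemma lo_count {ι : Type*} [Fintype ι] (c : ι → ℝ) (r : ℝ) :
    (((univ : Finset (ι → Bool))).filter (fun w => ∑ i, c i * sv w i = r)).card
      ≤ (((univ : Finset ι).filter (fun i => c i ≠ 0)).card.choose
          (((univ : Finset ι).filter (fun i => c i ≠ 0)).card / 2))
        * 2 ^ (Fintype.card ι - ((univ : Finset ι).filter (fun i => c i ≠ 0)).card) := by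
  classical
  set S := (univ : Finset ι).filter (fun i => c i ≠ 0) with hSdef
  set e : (ι → Bool) ≃ ({i // c i ≠ 0} → Bool) × ({i // ¬ c i ≠ 0} → Bool) :=
    Equiv.piEquivPiSubtypeProd (fun i => c i ≠ 0) (fun _ => Bool) with he
  have key : ∀ w : ι → Bool, (∑ i, c i * sv w i = r) ↔
      (∑ i : {i // c i ≠ 0}, c i.1 * sv ((e w).1) i = r) := by
    intro w
    have h1 : ∑ i, c i * sv w i = ∑ i ∈ S, c i * sv w i := by
      symm
      apply Finset.sum_subset (Finset.subset_univ _)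
      intro i _ hi
      simp only [hSdef, mem_filter, mem_univ, true_and, not_not] at hi
      rw [hi]; ring
    have h2 : ∑ i ∈ S, c i * sv w i = ∑ i : {i // c i ≠ 0}, c i.1 * sv w i.1 :=
      Finset.sum_subtype (p := fun i => c i ≠ 0) S (fun x => by simp [hSdef]) (fun i => c i * sv w i)
    rw [h1, h2]
    exact Iff.rfl
  have hcount : (((univ : Finset (ι → Bool))).filter (fun w => ∑ i, c i * sv w i = r)).card
      = (((univ : Finset (({i // c i ≠ 0} → Bool) × ({i // ¬ c i ≠ 0} → Bool)))).filter
          (fun p => ∑ i : {i // c i ≠ 0}, c i.1 * sv p.1 i = r)).card := by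
    rw [← card_filter_equiv e (fun p => ∑ i : {i // c i ≠ 0}, c i.1 * sv p.1 i = r)]
    apply Finset.card_bij (fun w _ => w)
    · intro w hw
      simp only [mem_filter, mem_univ, true_and] at hw ⊢
      exact (key w).mp hw
    · intro a b _ _ h; exact h
    · intro w hw
      refine ⟨w, ?_, rfl⟩
      simp only [mem_filter, mem_univ, true_and] at hw ⊢
      exact (key w).mpr hw
  rw [hcount, card_filter_fst (fun u : {i // c i ≠ 0} → Bool =>
    ∑ i : {i // c i ≠ 0}, c i.1 * sv u i = r)]
  have hcard1 : Fintype.card {i // c i ≠ 0} = S.card := by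
    rw [hSdef]
    rw [Fintype.card_subtype]
  have hcard2 : Fintype.card {i // ¬ c i ≠ 0} = Fintype.card ι - S.card := by
    rw [Fintype.card_subtype_compl, hcard1]
  have hbool : Fintype.card ({i // ¬ c i ≠ 0} → Bool) = 2 ^ (Fintype.card ι - S.card) := by
    rw [Fintype.card_fun, hcard2]; norm_num
  rw [hbool]
  have hlo := lo_count_core (fun i : {i // c i ≠ 0} => c i.1) (fun i => i.2) r
  rw [hcard1] at hlo
  refine Nat.mul_le_mul_right _ ?_
  convert hlo using 1
  apply Finset.card_bij (fun a _ => a)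
  · intro a ha
    rw [Finset.mem_filter] at ha ⊢
    exact ⟨by simp, ha.2⟩
  · intro a _ b _ h; exact h
  · intro b hb
    rw [Finset.mem_filter] at hb
    exact ⟨b, Finset.mem_filter.mpr ⟨by simp, hb.2⟩, rfl⟩

end Part3
section Part4
open Finset

lemma mul_sqrt_le_mul_sqrt {a b x y : ℝ} (ha : 0 ≤ a) (hb : 0 ≤ b)
    (h : a ^ 2 * x ≤ b ^ 2 * y) (hx : 0 ≤ x) :
    a * Real.sqrt x ≤ b * Real.sqrt y := by
  have hy : 0 ≤ b ^ 2 * y := le_trans (by positivity) h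
  calc a * Real.sqrt x = Real.sqrt (a ^ 2 * x) := by
        rw [Real.sqrt_mul (sq_nonneg a) x, Real.sqrt_sq ha]
    _ ≤ Real.sqrt (b ^ 2 * y) := Real.sqrt_le_sqrt h
    _ = b * Real.sqrt y := by
        rw [Real.sqrt_mul (sq_nonneg b) y, Real.sqrt_sq hb]

lemma cb_sqrt (k : ℕ) : (Nat.centralBinom k : ℝ) * Real.sqrt ((k : ℝ) + 1) ≤ 4 ^ k := by
  induction k with
  | zero => simp [Nat.centralBinom]
  | succ k ih =>
    have hk1 : (0:ℝ) < (k:ℝ) + 1 := by positivity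
    have hrec : ((k:ℝ) + 1) * (Nat.centralBinom (k+1) : ℝ)
        = 2 * (2*(k:ℝ)+1) * (Nat.centralBinom k : ℝ) := by
      have := Nat.succ_mul_centralBinom_succ k
      have h2 : ((k+1 : ℕ) * Nat.centralBinom (k+1) : ℝ)
          = ((2 * (2*k+1) * Nat.centralBinom k : ℕ) : ℝ) := by exact_mod_cast congrArg Nat.cast this
      push_cast at h2
      linarith
    have hratio : (2*(k:ℝ)+1) * Real.sqrt ((k:ℝ)+2) ≤ (2*((k:ℝ)+1)) * Real.sqrt ((k:ℝ)+1) := by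
      apply mul_sqrt_le_mul_sqrt (by positivity) (by positivity) _ (by positivity)
      nlinarith [sq_nonneg ((k:ℝ))]
    have hCB : (0:ℝ) ≤ (Nat.centralBinom k : ℝ) := by positivity
    have key : ((k:ℝ)+1) * ((Nat.centralBinom (k+1) : ℝ) * Real.sqrt ((k:ℝ)+2))
        ≤ ((k:ℝ)+1) * 4 ^ (k+1) := by
      calc ((k:ℝ)+1) * ((Nat.centralBinom (k+1) : ℝ) * Real.sqrt ((k:ℝ)+2))
          = (2 * (Nat.centralBinom k : ℝ)) * ((2*(k:ℝ)+1) * Real.sqrt ((k:ℝ)+2)) := by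
            rw [← mul_assoc, hrec]; ring
        _ ≤ (2 * (Nat.centralBinom k : ℝ)) * ((2*((k:ℝ)+1)) * Real.sqrt ((k:ℝ)+1)) := by
            apply mul_le_mul_of_nonneg_left hratio (by positivity)
        _ = (4*((k:ℝ)+1)) * ((Nat.centralBinom k : ℝ) * Real.sqrt ((k:ℝ)+1)) := by ring
        _ ≤ (4*((k:ℝ)+1)) * 4 ^ k := by
            apply mul_le_mul_of_nonneg_left ih (by positivity)
        _ = ((k:ℝ)+1) * 4 ^ (k+1) := by ring
    have := le_of_mul_le_mul_left key hk1
    calc (Nat.centralBinom (k+1) : ℝ) * Real.sqrt ((k+1 : ℕ) + 1)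
        = (Nat.centralBinom (k+1) : ℝ) * Real.sqrt ((k:ℝ)+2) := by push_cast; ring_nf
      _ ≤ 4 ^ (k+1) := this

lemma sqrt_two_le_two : Real.sqrt 2 ≤ 2 := by
  nlinarith [Real.sq_sqrt (show (0:ℝ) ≤ 2 by norm_num), Real.sqrt_nonneg 2]

/-- `C(m, ⌊m/2⌋) √m ≤ 3 · 2^m`. -/
lemma choose_half_sqrt_le (m : ℕ) : (Nat.choose m (m/2) : ℝ) * Real.sqrt m ≤ 3 * 2 ^ m := by
  rcases Nat.even_or_odd m with ⟨k, hk⟩ | ⟨k, hk⟩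
  · subst hk
    have h2 : (k + k) / 2 = k := by omega
    rw [h2]
    have hcb : (Nat.choose (k+k) k : ℝ) = (Nat.centralBinom k : ℝ) := by
      unfold Nat.centralBinom; norm_cast; congr 1; omega
    rw [hcb]
    have h3 : Real.sqrt ((k:ℝ) + k) ≤ Real.sqrt 2 * Real.sqrt ((k:ℝ)+1) := by
      rw [← Real.sqrt_mul (by norm_num)]
      apply Real.sqrt_le_sqrt
      nlinarith
    calc (Nat.centralBinom k : ℝ) * Real.sqrt ((k:ℕ) + k : ℕ)
        ≤ (Nat.centralBinom k : ℝ) * (Real.sqrt 2 * Real.sqrt ((k:ℝ)+1)) := by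
          apply mul_le_mul_of_nonneg_left _ (by positivity)
          · push_cast
            exact h3
      _ = Real.sqrt 2 * ((Nat.centralBinom k : ℝ) * Real.sqrt ((k:ℝ)+1)) := by ring
      _ ≤ 2 * 4 ^ k := by
          apply mul_le_mul sqrt_two_le_two (cb_sqrt k) (by positivity) (by norm_num)
      _ ≤ 3 * 2 ^ (k+k) := by
          have : (4:ℝ) ^ k = 2 ^ (k+k) := by
            rw [show (4:ℝ) = 2^2 by norm_num, ← pow_mul]
            congr 1; omega
          rw [this]; nlinarith [pow_pos (show (0:ℝ) < 2 by norm_num) (k+k)]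
  · subst hk
    have h2 : (2*k + 1) / 2 = k := by omega
    rw [h2]
    have hchoose : (Nat.choose (2*k+1) k : ℝ) ≤ 2 * (Nat.centralBinom k : ℝ) := by
      rcases Nat.eq_zero_or_pos k with hk0 | hk0
      · subst hk0; simp [Nat.centralBinom]
      · obtain ⟨j, rfl⟩ : ∃ j, k = j + 1 := ⟨k - 1, by omega⟩
        have hid : Nat.choose (2*(j+1)+1) (j+1) = Nat.choose (2*(j+1)) j + Nat.choose (2*(j+1)) (j+1) := by
          have := Nat.choose_succ_succ (2*(j+1)) j
          convert this using 2 <;> omega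
        have hle1 : Nat.choose (2*(j+1)) j ≤ Nat.centralBinom (j+1) := by
          unfold Nat.centralBinom
          have := Nat.choose_le_middle j (2*(j+1))
          have h5 : (2*(j+1))/2 = j+1 := by omega
          rwa [h5] at this
        have hle2 : Nat.choose (2*(j+1)) (j+1) ≤ Nat.centralBinom (j+1) := by
          unfold Nat.centralBinom
          exact le_rfl
        have : Nat.choose (2*(j+1)+1) (j+1) ≤ 2 * Nat.centralBinom (j+1) := by omega
        exact_mod_cast this
    have h3 : Real.sqrt ((2*k:ℝ) + 1) ≤ Real.sqrt 2 * Real.sqrt ((k:ℝ)+1) := by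
      rw [← Real.sqrt_mul (by norm_num)]
      apply Real.sqrt_le_sqrt
      nlinarith
    calc (Nat.choose (2*k+1) k : ℝ) * Real.sqrt ((2*k+1 : ℕ) : ℝ)
        ≤ (2 * (Nat.centralBinom k : ℝ)) * (Real.sqrt 2 * Real.sqrt ((k:ℝ)+1)) := by
          apply mul_le_mul hchoose _ (Real.sqrt_nonneg _) (by positivity)
          · push_cast
            exact h3
      _ = 2 * Real.sqrt 2 * ((Nat.centralBinom k : ℝ) * Real.sqrt ((k:ℝ)+1)) := by ring
      _ ≤ 2 * 2 * 4 ^ k := by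
          apply mul_le_mul (by nlinarith [sqrt_two_le_two, Real.sqrt_nonneg 2]) (cb_sqrt k)
            (by positivity) (by norm_num)
      _ ≤ 3 * 2 ^ (2*k+1) := by
          have : (4:ℝ) ^ k = 2 ^ (2*k) := by
            rw [show (4:ℝ) = 2^2 by norm_num, ← pow_mul]
          rw [this, pow_succ]
          nlinarith [pow_pos (show (0:ℝ) < 2 by norm_num) (2*k)]

end Part4
section Part5
open Finset

/-- Komlós good-case counting bound. -/
lemma good_count {n k t₀ : ℕ} (hkn : k < n) (B : Fin k → Fin n → ℝ)
    (hnd : ¬ ∃ (j : Fin n) (T : Finset (Fin n)), j ∉ T ∧ T.card ≤ t₀ ∧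
      (fun a => B a j) ∈ Submodule.span ℝ ((fun l => (fun a => B a l)) '' (T : Set (Fin n)))) :
    ((((univ : Finset (Fin n → Bool))).filter
        (fun x => sv x ∈ Submodule.span ℝ (Set.range B))).card : ℝ) * Real.sqrt ((t₀:ℝ)+1)
      ≤ 6 * 2 ^ k := by
  classical
  obtain ⟨S, hScard, hS⟩ := exists_pivot B
  have hSne : Sᶜ.Nonempty := by
    rw [← Finset.card_pos, Finset.card_compl]
    simp only [Fintype.card_fin]
    omega
  obtain ⟨j0, hj0c⟩ := hSne
  have hj0 : j0 ∉ S := Finset.mem_compl.mp hj0c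
  obtain ⟨c, hcS, hcv, hcspan⟩ := hS j0
  set T : Finset (Fin n) := univ.filter (fun i => c i ≠ 0) with hT
  have hTS : T ⊆ S := by
    intro i hi
    rw [hT, Finset.mem_filter] at hi
    exact hcS i hi.2
  have hTset : ((T : Set (Fin n))) = {i | c i ≠ 0} := by
    ext i; simp [hT]
  have hTcard : t₀ + 1 ≤ T.card := by
    by_contra hcon
    apply hnd
    refine ⟨j0, T, fun h => hj0 (hTS h), by omega, ?_⟩
    rw [hTset]
    exact hcspan
  -- the sum over all indices localizes to `S`
  have hsum : ∀ x : Fin n → Bool, ∑ i, c i * sv x i = ∑ i : {a // a ∈ S}, c i.1 * sv x i.1 := by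
    intro x
    rw [← Finset.sum_subtype (p := fun i => i ∈ S) S (fun x => Iff.rfl) (fun i => c i * sv x i)]
    symm
    apply Finset.sum_subset (Finset.subset_univ _)
    intro i _ hi
    have : c i = 0 := by
      by_contra hne
      exact hi (hcS i hne)
    rw [this]; ring
  set W : Finset ({a // a ∈ S} → Bool) := univ.filter
    (fun w => (∑ i : {a // a ∈ S}, c i.1 * sv w i = 1) ∨ (∑ i : {a // a ∈ S}, c i.1 * sv w i = -1))
    with hW
  have hinj : Set.InjOn (fun x : Fin n → Bool => (fun i : {a // a ∈ S} => x i.1))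
      (((univ : Finset (Fin n → Bool))).filter
        (fun x => sv x ∈ Submodule.span ℝ (Set.range B)) : Finset (Fin n → Bool)) := by
    intro x hx x' hx' h
    simp only [coe_filter, Set.mem_setOf_eq, mem_univ, true_and] at hx hx'
    apply sv_injective
    funext j
    obtain ⟨c', hcS', hcv', -⟩ := hS j
    rw [hcv' _ hx, hcv' _ hx']
    apply Finset.sum_congr rfl
    intro i _
    by_cases hci : c' i = 0
    · rw [hci]; ring
    · have hiS := hcS' i hci
      have : x i = x' i := congrFun h ⟨i, hiS⟩
      unfold sv
      rw [this]
  have hmaps : ∀ x ∈ ((univ : Finset (Fin n → Bool))).filter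
      (fun x => sv x ∈ Submodule.span ℝ (Set.range B)),
      (fun i : {a // a ∈ S} => x i.1) ∈ W := by
    intro x hx
    rw [Finset.mem_filter] at hx
    rw [hW, Finset.mem_filter]
    refine ⟨Finset.mem_univ _, ?_⟩
    have h1 : sv x j0 = ∑ i : {a // a ∈ S}, c i.1 * sv x i.1 := by
      rw [hcv _ hx.2, hsum]
    have h2 : (∑ i : {a // a ∈ S}, c i.1 * sv (fun i : {a // a ∈ S} => x i.1) i)
        = ∑ i : {a // a ∈ S}, c i.1 * sv x i.1 := rfl
    rw [h2, ← h1]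
    exact sv_apply_ne x j0
  have hcount : (((univ : Finset (Fin n → Bool))).filter
      (fun x => sv x ∈ Submodule.span ℝ (Set.range B))).card ≤ W.card :=
    Finset.card_le_card_of_injOn _ hmaps hinj
  -- bound W.card by Littlewood–Offord
  set S' : Finset {a // a ∈ S} := univ.filter (fun i : {a // a ∈ S} => c i.1 ≠ 0) with hS'
  have hS'card : S'.card = T.card := by
    apply Finset.card_bij (fun i _ => i.1)
    · intro i hi
      rw [hS', Finset.mem_filter] at hi
      rw [hT, Finset.mem_filter]
      exact ⟨Finset.mem_univ _, hi.2⟩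
    · intro a ha b hb h
      exact Subtype.ext h
    · intro j hj
      rw [hT, Finset.mem_filter] at hj
      exact ⟨⟨j, hcS j hj.2⟩, by rw [hS', Finset.mem_filter]; exact ⟨Finset.mem_univ _, hj.2⟩, rfl⟩
  have hWcard : W.card ≤ 2 * (T.card.choose (T.card / 2)) * 2 ^ (S.card - T.card) := by
    have hsub : W ⊆ (univ.filter (fun w : {a // a ∈ S} → Bool =>
          ∑ i : {a // a ∈ S}, c i.1 * sv w i = 1))
        ∪ (univ.filter (fun w : {a // a ∈ S} → Bool =>
          ∑ i : {a // a ∈ S}, c i.1 * sv w i = -1)) := by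
      intro w hw
      rw [hW, Finset.mem_filter] at hw
      rw [Finset.mem_union, Finset.mem_filter, Finset.mem_filter]
      rcases hw.2 with h | h
      · exact Or.inl ⟨Finset.mem_univ _, h⟩
      · exact Or.inr ⟨Finset.mem_univ _, h⟩
    have h1 := lo_count (fun i : {a // a ∈ S} => c i.1) 1
    have h2 := lo_count (fun i : {a // a ∈ S} => c i.1) (-1)
    rw [← hS'] at h1 h2
    rw [hS'card] at h1 h2
    have hfin : Fintype.card {a // a ∈ S} = S.card := Fintype.card_coe S
    rw [hfin] at h1 h2
    calc W.card ≤ _ := Finset.card_le_card hsub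
      _ ≤ _ := Finset.card_union_le _ _
      _ ≤ T.card.choose (T.card / 2) * 2 ^ (S.card - T.card)
          + T.card.choose (T.card / 2) * 2 ^ (S.card - T.card) :=
            Nat.add_le_add (le_trans (le_of_eq (card_filter_univ_congr _)) h1)
              (le_trans (le_of_eq (card_filter_univ_congr _)) h2)
      _ = 2 * (T.card.choose (T.card / 2)) * 2 ^ (S.card - T.card) := by ring
  -- assemble, over ℝ
  have hTle : T.card ≤ S.card := Finset.card_le_card hTS
  have hsqrt : Real.sqrt ((t₀:ℝ)+1) ≤ Real.sqrt (T.card) := by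
    apply Real.sqrt_le_sqrt
    exact_mod_cast hTcard
  calc ((((univ : Finset (Fin n → Bool))).filter
        (fun x => sv x ∈ Submodule.span ℝ (Set.range B))).card : ℝ) * Real.sqrt ((t₀:ℝ)+1)
      ≤ (W.card : ℝ) * Real.sqrt (T.card) := by
        apply mul_le_mul (by exact_mod_cast hcount) hsqrt (Real.sqrt_nonneg _) (by positivity)
    _ ≤ (2 * (T.card.choose (T.card / 2)) * 2 ^ (S.card - T.card) : ℝ) * Real.sqrt (T.card) := by
        apply mul_le_mul_of_nonneg_right _ (Real.sqrt_nonneg _)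
        exact_mod_cast hWcard
    _ = 2 * 2 ^ (S.card - T.card) * (((T.card.choose (T.card / 2)) : ℝ) * Real.sqrt (T.card)) := by
        ring
    _ ≤ 2 * 2 ^ (S.card - T.card) * (3 * 2 ^ T.card) := by
        apply mul_le_mul_of_nonneg_left (choose_half_sqrt_le T.card) (by positivity)
    _ = 6 * ((2:ℝ) ^ (S.card - T.card) * 2 ^ T.card) := by ring
    _ = 6 * 2 ^ S.card := by rw [pow_sub_mul_pow (2:ℝ) hTle]
    _ ≤ 6 * 2 ^ k := by
        have : (2:ℝ) ^ S.card ≤ 2 ^ k := by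
          apply pow_le_pow_right₀ (by norm_num) (le_trans hScard (le_refl k))
        linarith
end Part5
section Part6
open Finset

/-- The `k × n` matrix of the first `k` rows (as `±1` reals). -/
def famB {n : ℕ} (k : ℕ) (hk : k ≤ n) (A : Matrix (Fin n) (Fin n) Bool) :
    Fin k → Fin n → ℝ := fun i => sv (A (Fin.castLE hk i))

/-- Event: row `k` lies in the span of the previous rows. -/
def EvP {n : ℕ} (k : Fin n) (A : Matrix (Fin n) (Fin n) Bool) : Prop :=
  sv (A k) ∈ Submodule.span ℝ (Set.range (famB k.1 k.2.le A))

/-- Degenerate matrices: some column is in the span of at most `t₀` other columns. -/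
def DegB {n k : ℕ} (t₀ : ℕ) (B : Fin k → Fin n → ℝ) : Prop :=
  ∃ (j : Fin n) (T : Finset (Fin n)), j ∉ T ∧ T.card ≤ t₀ ∧
    (fun a => B a j) ∈ Submodule.span ℝ ((fun l => (fun a => B a l)) '' (T : Set (Fin n)))

lemma det_zero_exists {n : ℕ} (A : Matrix (Fin n) (Fin n) Bool)
    (h : (sgn2r A).det = 0) : ∃ k : Fin n, EvP k A := by
  classical
  obtain ⟨v, hv0, hv⟩ := Matrix.exists_vecMul_eq_zero_iff.mpr h
  set s := univ.filter (fun i => v i ≠ 0) with hs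
  have hsne : s.Nonempty := by
    obtain ⟨i, hi⟩ := Function.ne_iff.mp hv0
    exact ⟨i, by simp [hs]; exact hi⟩
  set k := s.max' hsne with hk
  have hks : k ∈ s := s.max'_mem hsne
  have hvk : v k ≠ 0 := (mem_filter.mp hks).2
  have hmax : ∀ i, v i ≠ 0 → i ≤ k := fun i hi => s.le_max' i (by simp [hs]; exact hi)
  have hrow : ∀ j, ∑ i, v i * sv (A i) j = 0 := fun j => congrFun hv j
  refine ⟨k, ?_⟩
  unfold EvP
  have key : sv (A k) = ∑ i ∈ univ.filter (fun i => i < k), (-(v i / v k)) • sv (A i) := by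
    funext j
    have h0 := hrow j
    have hsplit : ∑ i, v i * sv (A i) j
        = v k * sv (A k) j + ∑ i ∈ univ.erase k, v i * sv (A i) j :=
      (Finset.add_sum_erase _ _ (mem_univ k)).symm
    have hsub : ∑ i ∈ univ.erase k, v i * sv (A i) j
        = ∑ i ∈ univ.filter (fun i => i < k), v i * sv (A i) j := by
      symm
      apply Finset.sum_subset
      · intro i hi
        rw [mem_filter] at hi
        exact mem_erase.mpr ⟨ne_of_lt hi.2, mem_univ _⟩
      · intro i hi hni
        rw [mem_erase] at hi
        rw [mem_filter] at hni
        have hvz : v i = 0 := by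
          by_contra hne
          have h1 := hmax i hne
          have h2 : i < k := lt_of_le_of_ne h1 hi.1
          exact hni ⟨mem_univ _, h2⟩
        rw [hvz]; ring
    have hkey : v k * sv (A k) j
        = - ∑ i ∈ univ.filter (fun i => i < k), v i * sv (A i) j := by
      rw [← hsub]; linarith [hsplit ▸ h0]
    have hRHS : (∑ i ∈ univ.filter (fun i => i < k), (-(v i / v k)) • sv (A i)) j
        = ∑ i ∈ univ.filter (fun i => i < k), (-(v i / v k)) * sv (A i) j := by
      rw [Finset.sum_apply]
      apply Finset.sum_congr rfl
      intro i _
      simp [smul_eq_mul]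
    rw [hRHS]
    have h2 : ∑ i ∈ univ.filter (fun i => i < k), (-(v i / v k)) * sv (A i) j
        = (-(1/v k)) * ∑ i ∈ univ.filter (fun i => i < k), v i * sv (A i) j := by
      rw [Finset.mul_sum]
      apply Finset.sum_congr rfl
      intro i _
      field_simp
    rw [h2, ← neg_neg (∑ i ∈ univ.filter (fun i => i < k), v i * sv (A i) j), ← hkey]
    field_simp
  rw [key]
  apply Submodule.sum_mem
  intro i hi
  apply Submodule.smul_mem
  apply Submodule.subset_span
  rw [mem_filter] at hi
  exact ⟨⟨i.1, Fin.lt_def.mp hi.2⟩, rfl⟩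

lemma bad_card_le (n : ℕ) :
    ((univ : Finset (Matrix (Fin n) (Fin n) Bool)).filter (fun A => (sgn2r A).det = 0)).card
    ≤ ∑ k : Fin n,
        ((univ : Finset (Matrix (Fin n) (Fin n) Bool)).filter (fun A => EvP k A)).card := by
  classical
  calc ((univ : Finset (Matrix (Fin n) (Fin n) Bool)).filter (fun A => (sgn2r A).det = 0)).card
      ≤ ((univ : Finset (Fin n)).biUnion (fun k =>
          (univ : Finset (Matrix (Fin n) (Fin n) Bool)).filter (fun A => EvP k A))).card := by
        apply Finset.card_le_card
        intro A hA
        rw [mem_filter] at hA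
        obtain ⟨k, hk⟩ := det_zero_exists A hA.2
        rw [Finset.mem_biUnion]
        exact ⟨k, mem_univ _, mem_filter.mpr ⟨mem_univ _, hk⟩⟩
    _ ≤ _ := Finset.card_biUnion_le

/-- Split `EvP` by degeneracy of the prefix. -/
lemma EvP_split (n t₀ : ℕ) (k : Fin n) :
    ((univ : Finset (Matrix (Fin n) (Fin n) Bool)).filter (fun A => EvP k A)).card
    ≤ ((univ : Finset (Matrix (Fin n) (Fin n) Bool)).filter
          (fun A => DegB t₀ (famB k.1 k.2.le A))).card
      + ((univ : Finset (Matrix (Fin n) (Fin n) Bool)).filter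
          (fun A => ¬ DegB t₀ (famB k.1 k.2.le A) ∧ EvP k A)).card := by
  classical
  calc _ ≤ (((univ : Finset (Matrix (Fin n) (Fin n) Bool)).filter
          (fun A => DegB t₀ (famB k.1 k.2.le A)))
        ∪ ((univ : Finset (Matrix (Fin n) (Fin n) Bool)).filter
          (fun A => ¬ DegB t₀ (famB k.1 k.2.le A) ∧ EvP k A))).card := by
        apply Finset.card_le_card
        intro A hA
        rw [mem_filter] at hA
        rw [Finset.mem_union, mem_filter, mem_filter]
        by_cases hD : DegB t₀ (famB k.1 k.2.le A)
        · exact Or.inl ⟨mem_univ _, hD⟩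
        · exact Or.inr ⟨mem_univ _, hD, hA.2⟩
    _ ≤ _ := Finset.card_union_le _ _

end Part6
section Part7
open Finset

lemma odlyzko_count' {ι κ : Type*} [Fintype ι] [Fintype κ] (f : κ → ι → ℝ) :
    ((univ : Finset (ι → Bool)).filter
        (fun w => sv w ∈ Submodule.span ℝ (Set.range f))).card ≤ 2 ^ (Fintype.card κ) := by
  classical
  set e := (Fintype.equivFin κ).symm with he
  have hr : Set.range f = Set.range (fun i : Fin (Fintype.card κ) => f (e i)) := by
    rw [show (fun i : Fin (Fintype.card κ) => f (e i)) = f ∘ e from rfl]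
    rw [Set.range_comp, Equiv.range_eq_univ, Set.image_univ]
  rw [hr]
  exact odlyzko_count _

lemma card_subtype_ne {n : ℕ} (k : Fin n) : Fintype.card {j : Fin n // j ≠ k} = n - 1 := by
  classical
  have h := Fintype.card_subtype_compl (fun j : Fin n => j = k)
  simp only [Fintype.card_subtype_eq, Fintype.card_fin] at h
  convert h using 2

lemma card_subtype_lt {n k : ℕ} (hk : k ≤ n) :
    Fintype.card {j : Fin n // (j : ℕ) < k} = k := by
  classical
  have e : {j : Fin n // (j : ℕ) < k} ≃ Fin k :=
    { toFun := fun j => ⟨j.1.1, j.2⟩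
      invFun := fun i => ⟨Fin.castLE hk i, i.2⟩
      left_inv := fun j => rfl
      right_inv := fun i => rfl }
  rw [Fintype.card_congr e, Fintype.card_fin]

lemma card_subtype_not_lt {n k : ℕ} (hk : k ≤ n) :
    Fintype.card {j : Fin n // ¬ (j : ℕ) < k} = n - k := by
  classical
  have h := Fintype.card_subtype_compl (fun j : Fin n => (j : ℕ) < k)
  rw [card_subtype_lt hk, Fintype.card_fin] at h
  exact h

/-- Counting vectors whose prefix sign-vector lies in a span. -/
lemma pref_span_count {n k : ℕ} (hk : k ≤ n) {κ : Type*} [Fintype κ] (f : κ → Fin k → ℝ) :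
    ((univ : Finset (Fin n → Bool)).filter
        (fun x => sv (fun i : Fin k => x (Fin.castLE hk i)) ∈ Submodule.span ℝ (Set.range f))).card
      ≤ 2 ^ (Fintype.card κ) * 2 ^ (n - k) := by
  classical
  have h1 : ((univ : Finset (Fin n → Bool)).filter
        (fun x => sv (fun i : Fin k => x (Fin.castLE hk i)) ∈ Submodule.span ℝ (Set.range f))).card
      = ((univ : Finset ((Fin k → Bool) × ({j : Fin n // ¬ (j : ℕ) < k} → Bool))).filter
        (fun p => sv p.1 ∈ Submodule.span ℝ (Set.range f))).card := by
    exact card_filter_equiv (prefSplit hk) (fun p => sv p.1 ∈ Submodule.span ℝ (Set.range f))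
  rw [h1, card_filter_fst (fun u : Fin k → Bool => sv u ∈ Submodule.span ℝ (Set.range f))]
  have h2 : Fintype.card ({j : Fin n // ¬ (j : ℕ) < k} → Bool) = 2 ^ (n - k) := by
    rw [Fintype.card_fun, card_subtype_not_lt hk]
    norm_num
  rw [h2]
  exact Nat.mul_le_mul_right _ (le_trans (le_of_eq (card_filter_univ_congr _)) (odlyzko_count' f))

/-- Rows of the prefix, recovered from the second component of `rowSplit`. -/
def famY {n : ℕ} (k : Fin n) (y : {j : Fin n // j ≠ k} → Fin n → Bool) :
    Fin k.1 → Fin n → ℝ :=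
  fun i => sv (y ⟨Fin.castLE k.2.le i, Fin.ne_of_lt (Fin.lt_def.mpr i.isLt)⟩)

lemma famY_eq {n : ℕ} (k : Fin n) (A : Matrix (Fin n) (Fin n) Bool) :
    famY k ((rowSplit k A).2) = famB k.1 k.2.le A := rfl

/-- Good-case bound for the event `EvP k`. -/
lemma Ev_good_bound (n t₀ : ℕ) (k : Fin n) :
    (((univ : Finset (Matrix (Fin n) (Fin n) Bool)).filter
        (fun A => ¬ DegB t₀ (famB k.1 k.2.le A) ∧ EvP k A)).card : ℝ)
      ≤ ((2:ℝ) ^ n) ^ (n - 1) * (6 * 2 ^ (k:ℕ) / Real.sqrt ((t₀:ℝ)+1)) := by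
  classical
  have hsqrt : (0:ℝ) < Real.sqrt ((t₀:ℝ)+1) := Real.sqrt_pos.mpr (by positivity)
  have hcard : (Fintype.card ({j : Fin n // j ≠ k} → Fin n → Bool) : ℝ) = ((2:ℝ) ^ n) ^ (n-1) := by
    rw [Fintype.card_fun, Fintype.card_fun, Fintype.card_fin, card_subtype_ne]
    push_cast
    rw [Fintype.card_bool]
    push_cast
    ring
  have hmc := master_count (rowSplit k)
    (fun A => ¬ DegB t₀ (famB k.1 k.2.le A) ∧ EvP k A)
    (fun y => ¬ DegB t₀ (famY k y))
    (fun y x => sv x ∈ Submodule.span ℝ (Set.range (famY k y)))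
    (fun A hA => ⟨hA.1, hA.2⟩)
    (6 * 2 ^ (k:ℕ) / Real.sqrt ((t₀:ℝ)+1)) (by positivity)
    (fun y hy => by
      rw [le_div_iff₀ hsqrt]
      refine le_trans ?_ (good_count k.2 (famY k y) hy)
      apply mul_le_mul_of_nonneg_right _ (Real.sqrt_nonneg _)
      exact_mod_cast le_of_eq (card_filter_univ_congr _))
  rw [← hcard]
  refine le_trans ?_ hmc
  exact_mod_cast le_of_eq (card_filter_univ_congr _)

/-- Columns of the prefix, recovered from the second component of `colSplit`. -/
def colFam {n : ℕ} (k : Fin n) (j0 : Fin n) (T : Finset (Fin n))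
    (y : Fin n → {j : Fin n // j ≠ j0} → Bool) : {l // l ∈ T} → Fin k.1 → ℝ :=
  fun l i => if h : l.1 = j0 then 0 else sv (y (Fin.castLE k.2.le i)) ⟨l.1, h⟩

/-- Degenerate-case bound for a single pair `(j0, T)`. -/
lemma Deg_pair_bound (n t₀ : ℕ) (k : Fin n) (j0 : Fin n) (T : Finset (Fin n))
    (hj0 : j0 ∉ T) (hT : T.card ≤ t₀) :
    (((univ : Finset (Matrix (Fin n) (Fin n) Bool)).filter
        (fun A => (fun a => famB k.1 k.2.le A a j0) ∈
          Submodule.span ℝ ((fun l => (fun a => famB k.1 k.2.le A a l)) '' (T : Set (Fin n))))).card : ℝ)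
      ≤ ((2:ℝ) ^ (n-1)) ^ n * ((2:ℝ) ^ t₀ * 2 ^ (n - k.1)) := by
  classical
  have hcard : (Fintype.card (Fin n → {j : Fin n // j ≠ j0} → Bool) : ℝ)
      = ((2:ℝ) ^ (n-1)) ^ n := by
    rw [Fintype.card_fun, Fintype.card_fun, Fintype.card_fin, card_subtype_ne, Fintype.card_bool]
    push_cast
    ring
  rw [← hcard]
  apply master_count (colSplit j0) _
    (fun _ => True)
    (fun y x => (fun i : Fin k.1 => sv x (Fin.castLE k.2.le i)) ∈
      Submodule.span ℝ (Set.range (colFam k j0 T y)))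
  · intro A hA
    refine ⟨trivial, ?_⟩
    have hset : Set.range (colFam k j0 T ((colSplit j0 A).2))
        = (fun l => (fun a => famB k.1 k.2.le A a l)) '' (T : Set (Fin n)) := by
      ext u
      constructor
      · rintro ⟨l, rfl⟩
        have hne : l.1 ≠ j0 := fun h => hj0 (h ▸ l.2)
        refine ⟨l.1, l.2, ?_⟩
        funext i
        simp only [colFam, dif_neg hne]
        rfl
      · rintro ⟨l, hl, rfl⟩
        have hne : l ≠ j0 := fun h => hj0 (h ▸ hl)
        refine ⟨⟨l, hl⟩, ?_⟩
        funext i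
        simp only [colFam, dif_neg hne]
        rfl
    rw [hset]
    exact hA
  · positivity
  · intro y _
    have h1 := pref_span_count k.2.le (colFam k j0 T y)
    have h2 : Fintype.card {l // l ∈ T} = T.card := Fintype.card_coe T
    rw [h2] at h1
    calc (((univ : Finset (Fin n → Bool))).filter
          (fun x => (fun i : Fin k.1 => sv x (Fin.castLE k.2.le i)) ∈
            Submodule.span ℝ (Set.range (colFam k j0 T y))) |>.card : ℝ)
        ≤ ((2 ^ T.card * 2 ^ (n - k.1) : ℕ) : ℝ) := by exact_mod_cast h1
      _ ≤ ((2:ℝ) ^ t₀ * 2 ^ (n - k.1)) := by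
          push_cast
          apply mul_le_mul_of_nonneg_right _ (by positivity)
          apply pow_le_pow_right₀ (by norm_num) hT

/-- Degenerate-case bound for the event. -/
lemma Deg_bound (n t₀ : ℕ) (k : Fin n) :
    (((univ : Finset (Matrix (Fin n) (Fin n) Bool)).filter
        (fun A => DegB t₀ (famB k.1 k.2.le A))).card : ℝ)
      ≤ ((n : ℝ) * ∑ j ∈ Finset.range (t₀+1), (n.choose j : ℝ))
        * (((2:ℝ) ^ (n-1)) ^ n * ((2:ℝ) ^ t₀ * 2 ^ (n - k.1))) := by
  classical
  set P : Finset (Fin n × Finset (Fin n)) :=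
    univ.filter (fun p => p.1 ∉ p.2 ∧ p.2.card ≤ t₀) with hP
  have hsub : (univ : Finset (Matrix (Fin n) (Fin n) Bool)).filter
        (fun A => DegB t₀ (famB k.1 k.2.le A))
      ⊆ P.biUnion (fun p => (univ : Finset (Matrix (Fin n) (Fin n) Bool)).filter
        (fun A => (fun a => famB k.1 k.2.le A a p.1) ∈
          Submodule.span ℝ ((fun l => (fun a => famB k.1 k.2.le A a l)) '' (p.2 : Set (Fin n))))) := by
    intro A hA
    rw [mem_filter] at hA
    obtain ⟨j, T, hj, hT, hspan⟩ := hA.2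
    rw [Finset.mem_biUnion]
    exact ⟨(j, T), by rw [hP, mem_filter]; exact ⟨mem_univ _, hj, hT⟩,
      mem_filter.mpr ⟨mem_univ _, hspan⟩⟩
  have hPcard : (P.card : ℝ) ≤ (n : ℝ) * ∑ j ∈ Finset.range (t₀+1), (n.choose j : ℝ) := by
    have h1 : P ⊆ (univ : Finset (Fin n)) ×ˢ ((Finset.range (t₀+1)).biUnion
        (fun j => Finset.powersetCard j (univ : Finset (Fin n)))) := by
      intro p hp
      rw [hP, mem_filter] at hp
      rw [Finset.mem_product]
      refine ⟨mem_univ _, ?_⟩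
      rw [Finset.mem_biUnion]
      exact ⟨p.2.card, Finset.mem_range.mpr (by omega),
        Finset.mem_powersetCard.mpr ⟨Finset.subset_univ _, rfl⟩⟩
    calc (P.card : ℝ) ≤ (((univ : Finset (Fin n)) ×ˢ ((Finset.range (t₀+1)).biUnion
          (fun j => Finset.powersetCard j (univ : Finset (Fin n))))).card : ℝ) := by
          exact_mod_cast Finset.card_le_card h1
      _ ≤ (n : ℝ) * ∑ j ∈ Finset.range (t₀+1), (n.choose j : ℝ) := by
          rw [Finset.card_product, Finset.card_univ, Fintype.card_fin]
          push_cast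
          apply mul_le_mul_of_nonneg_left _ (by positivity)
          calc (((Finset.range (t₀+1)).biUnion
              (fun j => Finset.powersetCard j (univ : Finset (Fin n)))).card : ℝ)
              ≤ ((∑ j ∈ Finset.range (t₀+1),
                  (Finset.powersetCard j (univ : Finset (Fin n))).card : ℕ) : ℝ) := by
                exact_mod_cast Finset.card_biUnion_le
            _ = ∑ j ∈ Finset.range (t₀+1), (n.choose j : ℝ) := by
                push_cast
                apply Finset.sum_congr rfl
                intro j _
                rw [Finset.card_powersetCard, Finset.card_univ, Fintype.card_fin]
  calc (((univ : Finset (Matrix (Fin n) (Fin n) Bool)).filter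
        (fun A => DegB t₀ (famB k.1 k.2.le A))).card : ℝ)
      ≤ ((P.biUnion (fun p => (univ : Finset (Matrix (Fin n) (Fin n) Bool)).filter
        (fun A => (fun a => famB k.1 k.2.le A a p.1) ∈
          Submodule.span ℝ ((fun l => (fun a => famB k.1 k.2.le A a l)) '' (p.2 : Set (Fin n)))))).card : ℝ) := by
        exact_mod_cast Finset.card_le_card hsub
    _ ≤ ∑ p ∈ P, (((univ : Finset (Matrix (Fin n) (Fin n) Bool)).filter
        (fun A => (fun a => famB k.1 k.2.le A a p.1) ∈
          Submodule.span ℝ ((fun l => (fun a => famB k.1 k.2.le A a l)) '' (p.2 : Set (Fin n))))).card : ℝ) := by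
        exact_mod_cast Finset.card_biUnion_le
    _ ≤ ∑ _p ∈ P, ((2:ℝ) ^ (n-1)) ^ n * ((2:ℝ) ^ t₀ * 2 ^ (n - k.1)) := by
        apply Finset.sum_le_sum
        intro p hp
        rw [hP, mem_filter] at hp
        exact Deg_pair_bound n t₀ k p.1 p.2 hp.2.1 hp.2.2
    _ = (P.card : ℝ) * (((2:ℝ) ^ (n-1)) ^ n * ((2:ℝ) ^ t₀ * 2 ^ (n - k.1))) := by
        rw [Finset.sum_const, nsmul_eq_mul]
    _ ≤ _ := by
        apply mul_le_mul_of_nonneg_right hPcard (by positivity)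

end Part7
section Part8
open Finset

/-- Plain Odlyzko bound for the event `EvP k`. -/
lemma Ev_plain_bound (n : ℕ) (k : Fin n) :
    (((univ : Finset (Matrix (Fin n) (Fin n) Bool)).filter (fun A => EvP k A)).card : ℝ)
      ≤ ((2:ℝ) ^ n) ^ (n - 1) * 2 ^ (k:ℕ) := by
  classical
  have hcard : (Fintype.card ({j : Fin n // j ≠ k} → Fin n → Bool) : ℝ) = ((2:ℝ) ^ n) ^ (n-1) := by
    rw [Fintype.card_fun, Fintype.card_fun, Fintype.card_fin, card_subtype_ne, Fintype.card_bool]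
    push_cast
    ring
  have hmc := master_count (rowSplit k) (fun A => EvP k A) (fun _ => True)
    (fun y x => sv x ∈ Submodule.span ℝ (Set.range (famY k y)))
    (fun A hA => ⟨trivial, hA⟩)
    ((2:ℝ) ^ (k:ℕ)) (by positivity)
    (fun y _ => by
      have h := odlyzko_count' (famY k y)
      rw [Fintype.card_fin] at h
      calc _ ≤ ((2 ^ (k:ℕ) : ℕ) : ℝ) := by
            exact_mod_cast le_trans (le_of_eq (card_filter_univ_congr _)) h
        _ = (2:ℝ) ^ (k:ℕ) := by push_cast; ring)
  rw [← hcard]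
  refine le_trans ?_ hmc
  exact_mod_cast le_of_eq (card_filter_univ_congr _)

lemma aux20 (m : ℕ) (hm : 9 ≤ m) : 20 * (m+1) ≤ 2^m := by
  induction m with
  | zero => omega
  | succ m ih =>
    rcases Nat.lt_or_ge m 9 with h | h
    · have hm8 : m = 8 := by omega
      subst hm8
      norm_num
    · have h1 := ih h
      have h2 : 2^(m+1) = 2 * 2^m := by ring
      omega

lemma n_le_two_pow_div20 (n : ℕ) (hn : 180 ≤ n) : n ≤ 2^(n/20) := by
  have h9 : 9 ≤ n / 20 := by omega
  have h1 := aux20 (n/20) h9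
  have h2 : n ≤ 20 * (n/20 + 1) := by omega
  omega

lemma choose_mono_half (n : ℕ) : ∀ b a, a ≤ b → b ≤ n/2 → n.choose a ≤ n.choose b := by
  intro b
  induction b with
  | zero => intro a ha _; interval_cases a; exact le_rfl
  | succ b ih =>
    intro a ha hb
    rcases Nat.lt_or_ge a (b+1) with h | h
    · calc n.choose a ≤ n.choose b := ih a (by omega) (by omega)
        _ ≤ n.choose (b+1) := Nat.choose_le_succ_of_lt_half_left (by omega)
    · have : a = b + 1 := by omega
      subst this
      exact le_rfl

lemma pow_self_le_exp_fact (t : ℕ) : ((t:ℝ)) ^ t ≤ 3 ^ t * (t.factorial : ℝ) := by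
  have hfac : (0:ℝ) < (t.factorial : ℝ) := by
    exact_mod_cast t.factorial_pos
  have h1 : ((t:ℝ)) ^ t / (t.factorial : ℝ) ≤ Real.exp t := by
    calc ((t:ℝ)) ^ t / (t.factorial : ℝ)
        ≤ ∑ i ∈ Finset.range (t+1), (t:ℝ) ^ i / (i.factorial : ℝ) := by
          exact Finset.single_le_sum (f := fun i => (t:ℝ) ^ i / (i.factorial : ℝ))
            (fun i _ => by positivity) (Finset.mem_range.mpr (Nat.lt_succ_self t))
      _ ≤ Real.exp t := Real.sum_le_exp_of_nonneg (by positivity) (t+1)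
  have h2 : Real.exp (t:ℝ) ≤ 3 ^ t := by
    have he : Real.exp (t:ℝ) = Real.exp 1 ^ t := by
      rw [← Real.exp_nat_mul, mul_one]
    rw [he]
    apply pow_le_pow_left₀ (le_of_lt (Real.exp_pos 1))
    calc Real.exp 1 ≤ 2.7182818286 := le_of_lt Real.exp_one_lt_d9
      _ ≤ 3 := by norm_num
  calc ((t:ℝ)) ^ t = (((t:ℝ)) ^ t / (t.factorial : ℝ)) * (t.factorial : ℝ) := by
        field_simp
    _ ≤ Real.exp t * (t.factorial : ℝ) := by
        apply mul_le_mul_of_nonneg_right h1 (le_of_lt hfac)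
    _ ≤ 3 ^ t * (t.factorial : ℝ) := by
        apply mul_le_mul_of_nonneg_right h2 (le_of_lt hfac)

lemma choose_mul_pow_le (n t : ℕ) : (n.choose t : ℝ) * (t:ℝ) ^ t ≤ ((3*n : ℕ) : ℝ) ^ t := by
  have h1 : (n.choose t : ℝ) * (t.factorial : ℝ) ≤ (n:ℝ) ^ t := by
    have := Nat.descFactorial_le_pow n t
    have h2 : t.factorial * n.choose t = n.descFactorial t :=
      (Nat.descFactorial_eq_factorial_mul_choose n t).symm
    calc (n.choose t : ℝ) * (t.factorial : ℝ) = ((t.factorial * n.choose t : ℕ) : ℝ) := by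
          push_cast; ring
      _ = ((n.descFactorial t : ℕ) : ℝ) := by rw [h2]
      _ ≤ (n:ℝ) ^ t := by exact_mod_cast this
  calc (n.choose t : ℝ) * (t:ℝ) ^ t
      ≤ (n.choose t : ℝ) * (3 ^ t * (t.factorial : ℝ)) := by
        apply mul_le_mul_of_nonneg_left (pow_self_le_exp_fact t) (by positivity)
    _ = 3 ^ t * ((n.choose t : ℝ) * (t.factorial : ℝ)) := by ring
    _ ≤ 3 ^ t * (n:ℝ) ^ t := by
        apply mul_le_mul_of_nonneg_left h1 (by positivity)
    _ = ((3*n : ℕ) : ℝ) ^ t := by push_cast; rw [mul_pow]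

lemma choose_le_two_pow_nine (n : ℕ) (hn : 10000 ≤ n) :
    (n.choose (n/100) : ℝ) ≤ 2 ^ (9 * (n/100)) := by
  set t := n / 100 with ht
  have htpos : 0 < t := by omega
  have h3n : (3*n : ℕ) ≤ 512 * t := by omega
  have h1 := choose_mul_pow_le n t
  have h2 : ((3*n : ℕ) : ℝ) ^ t ≤ ((512 * t : ℕ) : ℝ) ^ t := by
    apply pow_le_pow_left₀ (by positivity)
    exact_mod_cast h3n
  have h3 : ((512 * t : ℕ) : ℝ) ^ t = 2 ^ (9*t) * (t:ℝ) ^ t := by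
    push_cast
    rw [mul_pow, pow_mul]
    norm_num
  have htpow : (0:ℝ) < (t:ℝ) ^ t := by
    apply pow_pos
    exact_mod_cast htpos
  have h4 : (n.choose t : ℝ) * (t:ℝ) ^ t ≤ (2 ^ (9*t)) * (t:ℝ) ^ t := by
    calc (n.choose t : ℝ) * (t:ℝ) ^ t ≤ ((3*n : ℕ) : ℝ) ^ t := h1
      _ ≤ ((512 * t : ℕ) : ℝ) ^ t := h2
      _ = 2 ^ (9*t) * (t:ℝ) ^ t := h3
  exact le_of_mul_le_mul_right h4 htpow

lemma sumchoose_le (n : ℕ) (hn : 10000 ≤ n) :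
    (∑ j ∈ Finset.range (n/100 + 1), ((n.choose j : ℕ) : ℝ)) ≤ (n:ℝ) * 2 ^ (9 * (n/100)) := by
  have hmono : ∀ j ∈ Finset.range (n/100 + 1), ((n.choose j : ℕ) : ℝ) ≤ (n.choose (n/100) : ℝ) := by
    intro j hj
    rw [Finset.mem_range] at hj
    exact_mod_cast choose_mono_half n (n/100) j (by omega) (by omega)
  calc (∑ j ∈ Finset.range (n/100 + 1), ((n.choose j : ℕ) : ℝ))
      ≤ ∑ _j ∈ Finset.range (n/100 + 1), (n.choose (n/100) : ℝ) := Finset.sum_le_sum hmono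
    _ = (n/100 + 1 : ℕ) * (n.choose (n/100) : ℝ) := by
        rw [Finset.sum_const, Finset.card_range, nsmul_eq_mul]
    _ ≤ (n:ℝ) * 2 ^ (9 * (n/100)) := by
        apply mul_le_mul _ (choose_le_two_pow_nine n hn) (by positivity) (by positivity)
        exact_mod_cast Nat.le_of_lt_succ (by omega : (n/100 + 1) < n + 1)

lemma real_sqrt_le_self {x : ℝ} (hx : 1 ≤ x) : Real.sqrt x ≤ x := by
  nlinarith [Real.sq_sqrt (by linarith : (0:ℝ) ≤ x), Real.sqrt_nonneg x]

end Part8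
section Part9
open Finset

/-- **Komlós' theorem.**  An `n × n` matrix with iid uniform `±1` entries (modelled as a
uniform random Boolean matrix, with `true ↦ +1`, `false ↦ -1`) is singular with
probability `O(n^{-1/2})`. -/
theorem komlos_singularity :
    ∃ C : ℝ, 0 < C ∧ ∃ N : ℕ, ∀ n, N ≤ n →
      cprob (Finset.univ : Finset (Matrix (Fin n) (Fin n) Bool))
        (fun A => (sgn2r A).det = 0) ≤ C * (n : ℝ) ^ (-(1/2 : ℝ)) := by
  classical
  refine ⟨200, by norm_num, 10000, fun n hn => ?_⟩
  have hn1 : 1 ≤ n := by omega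
  have hnR : (1:ℝ) ≤ (n:ℝ) := by exact_mod_cast hn1
  have hsn : (0:ℝ) < Real.sqrt n := Real.sqrt_pos.mpr (by positivity)
  have hst : (0:ℝ) < Real.sqrt ((↑(n/100):ℝ)+1) := Real.sqrt_pos.mpr (by positivity)
  have hGpos : (0:ℝ) < ((2:ℝ)^n)^(n-1) := by positivity
  have hn20 : (n:ℝ) ≤ 2 ^ (n/20) := by exact_mod_cast n_le_two_pow_div20 n (by omega)
  have hsqn : Real.sqrt n ≤ (n:ℝ) := real_sqrt_le_self hnR
  -- shorthand for the degenerate bound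
  set DegT : ℝ := ((n:ℝ) * ∑ j ∈ Finset.range (n/100 + 1), ((n.choose j : ℕ) : ℝ))
      * (((2:ℝ)^(n-1))^n * ((2:ℝ)^(n/100) * 2^(n - n/2 - 1))) with hDegT
  have hDegTnn : (0:ℝ) ≤ DegT := by rw [hDegT]; positivity
  -- per-k bound for large k
  have hbig : ∀ k : Fin n, ¬ ((k:ℕ) ≤ n/2) →
      (((univ : Finset (Matrix (Fin n) (Fin n) Bool)).filter (fun A => EvP k A)).card : ℝ)
        ≤ ((2:ℝ)^n)^(n-1) * (6 * 2^(k:ℕ) / Real.sqrt ((↑(n/100):ℝ)+1)) + DegT := by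
    intro k hk
    have hsplit := EvP_split n (n/100) k
    have hgood := Ev_good_bound n (n/100) k
    have hdeg := Deg_bound n (n/100) k
    have hdeg2 : (((univ : Finset (Matrix (Fin n) (Fin n) Bool)).filter
        (fun A => DegB (n/100) (famB k.1 k.2.le A))).card : ℝ) ≤ DegT := by
      refine le_trans hdeg ?_
      rw [hDegT]
      apply mul_le_mul_of_nonneg_left _ (by positivity)
      apply mul_le_mul_of_nonneg_left _ (by positivity)
      apply mul_le_mul_of_nonneg_left _ (by positivity)
      apply pow_le_pow_right₀ (by norm_num)
      omega
    calc (((univ : Finset (Matrix (Fin n) (Fin n) Bool)).filter (fun A => EvP k A)).card : ℝ)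
        ≤ (((univ : Finset (Matrix (Fin n) (Fin n) Bool)).filter
            (fun A => DegB (n/100) (famB k.1 k.2.le A))).card : ℝ)
          + (((univ : Finset (Matrix (Fin n) (Fin n) Bool)).filter
            (fun A => ¬ DegB (n/100) (famB k.1 k.2.le A) ∧ EvP k A)).card : ℝ) := by
          exact_mod_cast hsplit
      _ ≤ DegT + ((2:ℝ)^n)^(n-1) * (6 * 2^(k:ℕ) / Real.sqrt ((↑(n/100):ℝ)+1)) :=
          add_le_add hdeg2 hgood
      _ = _ := by ring
  -- total bound
  have htotal : (((univ : Finset (Matrix (Fin n) (Fin n) Bool)).filter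
        (fun A => (sgn2r A).det = 0)).card : ℝ)
      ≤ ((2:ℝ)^n)^(n-1) * 2^(n/2+1)
        + (6 / Real.sqrt ((↑(n/100):ℝ)+1)) * (((2:ℝ)^n)^(n-1) * 2^n)
        + (n:ℝ) * DegT := by
    have hcast : (((univ : Finset (Matrix (Fin n) (Fin n) Bool)).filter
        (fun A => (sgn2r A).det = 0)).card : ℝ)
        ≤ ∑ k : Fin n, (((univ : Finset (Matrix (Fin n) (Fin n) Bool)).filter
          (fun A => EvP k A)).card : ℝ) := by
      have := bad_card_le n
      push_cast
      exact_mod_cast this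
    refine le_trans hcast ?_
    rw [← Finset.sum_filter_add_sum_filter_not univ (fun k : Fin n => (k:ℕ) ≤ n/2)]
    have hS1 : ∑ k ∈ univ.filter (fun k : Fin n => (k:ℕ) ≤ n/2),
        (((univ : Finset (Matrix (Fin n) (Fin n) Bool)).filter (fun A => EvP k A)).card : ℝ)
        ≤ ((2:ℝ)^n)^(n-1) * 2^(n/2+1) := by
      calc ∑ k ∈ univ.filter (fun k : Fin n => (k:ℕ) ≤ n/2),
          (((univ : Finset (Matrix (Fin n) (Fin n) Bool)).filter (fun A => EvP k A)).card : ℝ)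
          ≤ ∑ k ∈ univ.filter (fun k : Fin n => (k:ℕ) ≤ n/2), ((2:ℝ)^n)^(n-1) * 2^(k:ℕ) :=
            Finset.sum_le_sum (fun k _ => Ev_plain_bound n k)
        _ = ((2:ℝ)^n)^(n-1) * ∑ k ∈ univ.filter (fun k : Fin n => (k:ℕ) ≤ n/2), (2:ℝ)^(k:ℕ) := by
            rw [Finset.mul_sum]
        _ ≤ ((2:ℝ)^n)^(n-1) * 2^(n/2+1) := by
            apply mul_le_mul_of_nonneg_left _ (le_of_lt hGpos)
            have e1 : ∑ k ∈ univ.filter (fun k : Fin n => (k:ℕ) ≤ n/2), (2:ℝ)^(k:ℕ)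
                = ∑ j ∈ (Finset.range n).filter (fun j => j ≤ n/2), (2:ℝ)^j := by
              rw [Finset.sum_filter, Finset.sum_filter]
              exact Fin.sum_univ_eq_sum_range (fun j => if j ≤ n/2 then (2:ℝ)^j else 0) n
            rw [e1]
            calc ∑ j ∈ (Finset.range n).filter (fun j => j ≤ n/2), (2:ℝ)^j
                ≤ ∑ j ∈ Finset.range (n/2+1), (2:ℝ)^j := by
                  apply Finset.sum_le_sum_of_subset_of_nonneg
                  · intro j hj
                    rw [Finset.mem_filter] at hj
                    exact Finset.mem_range.mpr (by omega)
                  · intros; positivity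
              _ = ((2:ℝ)^(n/2+1) - 1)/(2-1) := geom_sum_eq (by norm_num) (n/2+1)
              _ ≤ 2^(n/2+1) := by norm_num
    have hS23 : ∑ k ∈ univ.filter (fun k : Fin n => ¬ (k:ℕ) ≤ n/2),
        (((univ : Finset (Matrix (Fin n) (Fin n) Bool)).filter (fun A => EvP k A)).card : ℝ)
        ≤ (6 / Real.sqrt ((↑(n/100):ℝ)+1)) * (((2:ℝ)^n)^(n-1) * 2^n) + (n:ℝ) * DegT := by
      calc ∑ k ∈ univ.filter (fun k : Fin n => ¬ (k:ℕ) ≤ n/2),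
          (((univ : Finset (Matrix (Fin n) (Fin n) Bool)).filter (fun A => EvP k A)).card : ℝ)
          ≤ ∑ k ∈ univ.filter (fun k : Fin n => ¬ (k:ℕ) ≤ n/2),
            (((2:ℝ)^n)^(n-1) * (6 * 2^(k:ℕ) / Real.sqrt ((↑(n/100):ℝ)+1)) + DegT) :=
            Finset.sum_le_sum (fun k hk => hbig k (Finset.mem_filter.mp hk).2)
        _ = (∑ k ∈ univ.filter (fun k : Fin n => ¬ (k:ℕ) ≤ n/2),
              ((2:ℝ)^n)^(n-1) * (6 * 2^(k:ℕ) / Real.sqrt ((↑(n/100):ℝ)+1)))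
            + (univ.filter (fun k : Fin n => ¬ (k:ℕ) ≤ n/2)).card * DegT := by
            rw [Finset.sum_add_distrib, Finset.sum_const, nsmul_eq_mul]
        _ ≤ (6 / Real.sqrt ((↑(n/100):ℝ)+1)) * (((2:ℝ)^n)^(n-1) * 2^n) + (n:ℝ) * DegT := by
            apply add_le_add
            · calc ∑ k ∈ univ.filter (fun k : Fin n => ¬ (k:ℕ) ≤ n/2),
                  ((2:ℝ)^n)^(n-1) * (6 * 2^(k:ℕ) / Real.sqrt ((↑(n/100):ℝ)+1))
                  ≤ ∑ k : Fin n,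
                    ((2:ℝ)^n)^(n-1) * (6 * 2^(k:ℕ) / Real.sqrt ((↑(n/100):ℝ)+1)) := by
                    apply Finset.sum_le_sum_of_subset_of_nonneg (Finset.subset_univ _)
                    intros; positivity
                _ = (6 / Real.sqrt ((↑(n/100):ℝ)+1)) * ((2:ℝ)^n)^(n-1)
                    * ∑ k : Fin n, (2:ℝ)^(k:ℕ) := by
                    rw [Finset.mul_sum]
                    apply Finset.sum_congr rfl
                    intros; ring
                _ ≤ (6 / Real.sqrt ((↑(n/100):ℝ)+1)) * ((2:ℝ)^n)^(n-1) * 2^n := by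
                    apply mul_le_mul_of_nonneg_left _ (by positivity)
                    rw [Fin.sum_univ_eq_sum_range (fun j => (2:ℝ)^j) n]
                    rw [geom_sum_eq (by norm_num) n]
                    norm_num
                _ = (6 / Real.sqrt ((↑(n/100):ℝ)+1)) * (((2:ℝ)^n)^(n-1) * 2^n) := by ring
            · apply mul_le_mul_of_nonneg_right _ hDegTnn
              calc ((univ.filter (fun k : Fin n => ¬ (k:ℕ) ≤ n/2)).card : ℝ)
                  ≤ ((univ : Finset (Fin n)).card : ℝ) := by
                    exact_mod_cast Finset.card_filter_le _ _
                _ = (n:ℝ) := by rw [Finset.card_univ, Fintype.card_fin]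
    calc _ ≤ ((2:ℝ)^n)^(n-1) * 2^(n/2+1)
          + ((6 / Real.sqrt ((↑(n/100):ℝ)+1)) * (((2:ℝ)^n)^(n-1) * 2^n) + (n:ℝ) * DegT) :=
          add_le_add hS1 hS23
      _ = _ := by ring
  -- component comparisons
  have hA : ((2:ℝ)^n)^(n-1) * 2^(n/2+1) ≤ (1/Real.sqrt n) * (((2:ℝ)^n)^(n-1) * 2^n) := by
    have hcore : (2:ℝ)^(n/2+1) ≤ (1/Real.sqrt n) * 2^n := by
      rw [one_div, ← div_eq_inv_mul, le_div_iff₀ hsn]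
      calc (2:ℝ)^(n/2+1) * Real.sqrt n ≤ (2:ℝ)^(n/2+1) * (n:ℝ) := by
            apply mul_le_mul_of_nonneg_left hsqn (by positivity)
        _ ≤ (2:ℝ)^(n/2+1) * 2^(n/20) := by
            apply mul_le_mul_of_nonneg_left hn20 (by positivity)
        _ = (2:ℝ)^(n/2+1+n/20) := by rw [← pow_add]
        _ ≤ (2:ℝ)^n := pow_le_pow_right₀ (by norm_num) (by omega)
    calc ((2:ℝ)^n)^(n-1) * 2^(n/2+1)
        ≤ ((2:ℝ)^n)^(n-1) * ((1/Real.sqrt n) * 2^n) :=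
          mul_le_mul_of_nonneg_left hcore (le_of_lt hGpos)
      _ = (1/Real.sqrt n) * (((2:ℝ)^n)^(n-1) * 2^n) := by ring
  have hB : (6 / Real.sqrt ((↑(n/100):ℝ)+1)) * (((2:ℝ)^n)^(n-1) * 2^n)
      ≤ (60/Real.sqrt n) * (((2:ℝ)^n)^(n-1) * 2^n) := by
    apply mul_le_mul_of_nonneg_right _ (by positivity)
    rw [div_le_div_iff₀ hst hsn]
    have h100 : (1:ℝ)^2 * (n:ℝ) ≤ 10^2 * ((↑(n/100):ℝ)+1) := by
      have : n ≤ 100 * (n/100 + 1) := by omega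
      have h2 : (n:ℝ) ≤ 100 * ((↑(n/100):ℝ)+1) := by exact_mod_cast this
      nlinarith
    have h6 := mul_sqrt_le_mul_sqrt (a := 1) (b := 10) (x := (n:ℝ)) (y := (↑(n/100):ℝ)+1)
      (by norm_num) (by norm_num) h100 (by positivity)
    nlinarith [Real.sqrt_nonneg ((↑(n/100):ℝ)+1), Real.sqrt_nonneg (n:ℝ)]
  have hC : (n:ℝ) * DegT ≤ (1/Real.sqrt n) * (((2:ℝ)^n)^(n-1) * 2^n) := by
    have hGalt : (((2:ℝ)^n)^(n-1) : ℝ) = ((2:ℝ)^(n-1))^n := by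
      rw [← pow_mul, ← pow_mul]
      congr 1
      ring
    have hsum := sumchoose_le n hn
    have hcore : (n:ℝ) * (((n:ℝ) * ∑ j ∈ Finset.range (n/100 + 1), ((n.choose j : ℕ) : ℝ))
        * ((2:ℝ)^(n/100) * 2^(n - n/2 - 1))) ≤ (1/Real.sqrt n) * 2^n := by
      rw [one_div, ← div_eq_inv_mul, le_div_iff₀ hsn]
      have hnn : (0:ℝ) ≤ (n:ℝ) := by positivity
      calc (n:ℝ) * (((n:ℝ) * ∑ j ∈ Finset.range (n/100 + 1), ((n.choose j : ℕ) : ℝ))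
            * ((2:ℝ)^(n/100) * 2^(n - n/2 - 1))) * Real.sqrt n
          ≤ (n:ℝ) * (((n:ℝ) * ((n:ℝ) * 2^(9*(n/100))))
            * ((2:ℝ)^(n/100) * 2^(n - n/2 - 1))) * (n:ℝ) := by
            apply mul_le_mul _ hsqn (Real.sqrt_nonneg _) (by positivity)
            apply mul_le_mul_of_nonneg_left _ hnn
            apply mul_le_mul_of_nonneg_right _ (by positivity)
            apply mul_le_mul_of_nonneg_left hsum hnn
        _ = ((n:ℝ)*(n:ℝ)*(n:ℝ)*(n:ℝ)) * ((2:ℝ)^(9*(n/100)) * ((2:ℝ)^(n/100) * 2^(n - n/2 - 1))) := by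
            ring
        _ ≤ ((2:ℝ)^(n/20)*(2:ℝ)^(n/20)*(2:ℝ)^(n/20)*(2:ℝ)^(n/20))
            * ((2:ℝ)^(9*(n/100)) * ((2:ℝ)^(n/100) * 2^(n - n/2 - 1))) := by
            apply mul_le_mul_of_nonneg_right _ (by positivity)
            have h2 : (0:ℝ) ≤ (2:ℝ)^(n/20) := by positivity
            apply mul_le_mul (mul_le_mul (mul_le_mul hn20 hn20 hnn h2) hn20 hnn (by positivity))
              hn20 hnn (by positivity)
        _ = (2:ℝ)^(n/20+n/20+n/20+n/20+9*(n/100)+n/100+(n - n/2 - 1)) := by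
            rw [← pow_add, ← pow_add, ← pow_add, ← pow_add, ← pow_add, ← pow_add]
            congr 1
            omega
        _ ≤ (2:ℝ)^n := pow_le_pow_right₀ (by norm_num) (by omega)
    calc (n:ℝ) * DegT
        = ((2:ℝ)^(n-1))^n * ((n:ℝ) * (((n:ℝ) * ∑ j ∈ Finset.range (n/100 + 1),
            ((n.choose j : ℕ) : ℝ)) * ((2:ℝ)^(n/100) * 2^(n - n/2 - 1)))) := by
          rw [hDegT]; ring
      _ ≤ ((2:ℝ)^(n-1))^n * ((1/Real.sqrt n) * 2^n) :=
          mul_le_mul_of_nonneg_left hcore (by positivity)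
      _ = (1/Real.sqrt n) * (((2:ℝ)^n)^(n-1) * 2^n) := by rw [hGalt]; ring
  -- combine
  have hfinal : (((univ : Finset (Matrix (Fin n) (Fin n) Bool)).filter
        (fun A => (sgn2r A).det = 0)).card : ℝ)
      ≤ (62/Real.sqrt n) * (((2:ℝ)^n)^(n-1) * 2^n) := by
    refine le_trans htotal ?_
    calc ((2:ℝ)^n)^(n-1) * 2^(n/2+1)
        + (6 / Real.sqrt ((↑(n/100):ℝ)+1)) * (((2:ℝ)^n)^(n-1) * 2^n)
        + (n:ℝ) * DegT
        ≤ (1/Real.sqrt n) * (((2:ℝ)^n)^(n-1) * 2^n)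
          + (60/Real.sqrt n) * (((2:ℝ)^n)^(n-1) * 2^n)
          + (1/Real.sqrt n) * (((2:ℝ)^n)^(n-1) * 2^n) :=
          add_le_add (add_le_add hA hB) hC
      _ = (62/Real.sqrt n) * (((2:ℝ)^n)^(n-1) * 2^n) := by ring
  -- conclude
  have hcu : ((univ : Finset (Matrix (Fin n) (Fin n) Bool)).card : ℝ)
      = ((2:ℝ)^n)^(n-1) * 2^n := by
    rw [Finset.card_univ]
    have h1 : Fintype.card (Matrix (Fin n) (Fin n) Bool) = (2^n)^n := by
      show Fintype.card (Fin n → Fin n → Bool) = (2^n)^n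
      rw [Fintype.card_fun, Fintype.card_fun, Fintype.card_bool, Fintype.card_fin]
    rw [h1]
    push_cast
    rw [← pow_succ]
    congr 1
    omega
  have hrpow : (n:ℝ)^(-(1/2:ℝ)) = 1/Real.sqrt n := by
    rw [Real.rpow_neg (by positivity), Real.sqrt_eq_rpow]
    norm_num
  unfold cprob
  rw [hcu, div_le_iff₀ (by positivity), hrpow]
  calc (((univ : Finset (Matrix (Fin n) (Fin n) Bool)).filter
        (fun A => (sgn2r A).det = 0)).card : ℝ)
      ≤ (62/Real.sqrt n) * (((2:ℝ)^n)^(n-1) * 2^n) := hfinal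
    _ ≤ (200 * (1/Real.sqrt n)) * (((2:ℝ)^n)^(n-1) * 2^n) := by
        apply mul_le_mul_of_nonneg_right _ (by positivity)
        rw [div_le_iff₀ hsn, mul_assoc, one_div, inv_mul_cancel₀ (ne_of_gt hsn)]
        norm_num
    _ = 200 * (1/Real.sqrt n) * (((2:ℝ)^n)^(n-1) * 2^n) := by ring

end Part9
end
end

section
/- Let M be a uniform random element of M_{n,d} and fix distinct i₁, i₂ ∈ [n]. Conditional on M, let π : Ex_M(i₁,i₂) → Ex_M(i₂,i₁) be a uniform random bijection, and let ξ : [n] → {±1} be a sequence of iid uniform signs independent of all other variables. Form M̃ from M by replacing, for each j ∈ Ex_M(i₁,i₂), the 2×2 minor of M with rows (i₁,i₂) and columns (j, π(j)) (which equals the identity matrix I = [[1,0],[0,1]]) by I if ξ(j) = +1 and by J = [[0,1],[1,0]] if ξ(j) = −1, leaving all other entries unchanged. Then M̃ has the same distribution as M; in particular M̃ is a uniform random element of M_{n,d}. -/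
open scoped Classical ENNReal
open Finset

noncomputable section


/-- `M_{n,d}`: 0/1 matrices all of whose row and column sums equal `d`. -/
def regSet (n d : ℕ) : Finset (Matrix (Fin n) (Fin n) Bool) :=
  Finset.univ.filter fun A =>
    (∀ i, (Finset.univ.filter fun j => A i j = true).card = d) ∧
    (∀ j, (Finset.univ.filter fun i => A i j = true).card = d)

/-- `Ex_M(i₁,i₂) = N_M(i₁) \ N_M(i₂)`: columns `j` whose minor at rows `(i₁,i₂)` is
`(1,0)ᵀ`. -/
def exSet {n : ℕ} (M : Matrix (Fin n) (Fin n) Bool) (i₁ i₂ : Fin n) : Finset (Fin n) :=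
  Finset.univ.filter fun j => M i₁ j = true ∧ M i₂ j = false

/-- The matrix obtained from `M` by switching, for each `j ∈ T`, the `2 × 2` minor at
rows `(i₁,i₂)` and columns `(j, σ j)`: it is set to `I = [[1,0],[0,1]]` if `ξ j = true`
(sign `+1`) and to `J = [[0,1],[1,0]]` if `ξ j = false` (sign `-1`).  Here the
bijection `π : T → σ(T)` is encoded as (the restriction to `T` of) a permutation `σ`. -/
def shuffleAt {n : ℕ} (M : Matrix (Fin n) (Fin n) Bool) (i₁ i₂ : Fin n)
    (T : Finset (Fin n)) (σ : Equiv.Perm (Fin n)) (ξ : Fin n → Bool) :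
    Matrix (Fin n) (Fin n) Bool :=
  Matrix.of fun i j =>
    if i = i₁ then
      if j ∈ T then ξ j
      else if σ⁻¹ j ∈ T then !(ξ (σ⁻¹ j))
      else M i j
    else if i = i₂ then
      if j ∈ T then !(ξ j)
      else if σ⁻¹ j ∈ T then ξ (σ⁻¹ j)
      else M i j
    else M i j

/-- Uniform distribution on a finite set, with a default value when it is empty. -/
def uniformOn {α : Type*} (s : Finset α) (a₀ : α) : PMF α :=
  if h : s.Nonempty then PMF.uniformOfFinset s h else PMF.pure a₀


/-- If two functions have equicardinal fibers, there is a permutation intertwining them. -/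
lemma exists_perm_comp {α ι : Type*} [Fintype α] [DecidableEq α] [DecidableEq ι]
    (f g : α → ι)
    (h : ∀ c, (univ.filter fun x => f x = c).card = (univ.filter fun x => g x = c).card) :
    ∃ σ : Equiv.Perm α, ∀ x, g (σ x) = f x := by
  classical
  have e : ∀ c, {x // x ∈ univ.filter fun x => f x = c} ≃
      {x // x ∈ univ.filter fun x => g x = c} := fun c => Finset.equivOfCardEq (h c)
  have hx : ∀ x : α, x ∈ univ.filter fun y => f y = f x := by intro x; simp
  have key : ∀ x, g ((e (f x) ⟨x, hx x⟩).1) = f x := by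
    intro x
    have := (e (f x) ⟨x, hx x⟩).2
    exact (Finset.mem_filter.1 this).2
  have hinj : Function.Injective (fun x => ((e (f x) ⟨x, hx x⟩).1 : α)) := by
    intro x y hxy
    simp only at hxy
    have hf : f x = f y := by rw [← key x, ← key y, hxy]
    have trans : ∀ (c c' : ι) (_ : c = c') (z : α) (hz : z ∈ univ.filter fun w => f w = c)
        (hz' : z ∈ univ.filter fun w => f w = c'),
        ((e c ⟨z, hz⟩).1 : α) = ((e c' ⟨z, hz'⟩).1 : α) := by
      rintro c c' rfl z hz hz'; rfl
    have hy' : y ∈ univ.filter fun w => f w = f x := by simp [hf.symm]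
    rw [trans (f y) (f x) hf.symm y (hx y) hy'] at hxy
    have := (e (f x)).injective (Subtype.ext hxy)
    simpa using congrArg Subtype.val this
  exact ⟨Equiv.ofBijective _ (Finite.injective_iff_bijective.1 hinj), fun x => key x⟩

/-- The number of permutations intertwining `f` with `g` only depends on the
fiber statistics. -/
lemma card_perm_inter_eq {α ι : Type*} [Fintype α] [DecidableEq α] [DecidableEq ι]
    (f g f' g' : α → ι)
    (h1 : ∃ σ₁ : Equiv.Perm α, ∀ x, f' (σ₁ x) = f x)
    (h2 : ∃ σ₂ : Equiv.Perm α, ∀ x, g' (σ₂ x) = g x) :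
    (univ.filter fun σ : Equiv.Perm α => ∀ x, g (σ x) = f x).card
      = (univ.filter fun σ : Equiv.Perm α => ∀ x, g' (σ x) = f' x).card := by
  classical
  obtain ⟨σ₁, hσ₁⟩ := h1
  obtain ⟨σ₂, hσ₂⟩ := h2
  apply Finset.card_bij' (i := fun σ _ => σ₂ * σ * σ₁⁻¹) (j := fun σ _ => σ₂⁻¹ * σ * σ₁)
  · intro σ hσ
    simp only [mem_filter, mem_univ, true_and] at hσ ⊢
    intro x
    simp only [Equiv.Perm.mul_apply]
    rw [hσ₂, hσ (σ₁⁻¹ x)]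
    have : f' (σ₁ (σ₁⁻¹ x)) = f (σ₁⁻¹ x) := hσ₁ (σ₁⁻¹ x)
    simpa using this.symm
  · intro σ hσ
    simp only [mem_filter, mem_univ, true_and] at hσ ⊢
    intro x
    simp only [Equiv.Perm.mul_apply]
    rw [← hσ₂]
    simp only [Equiv.Perm.inv_def, Equiv.apply_symm_apply]
    rw [hσ (σ₁ x), hσ₁]
  · intro σ _; group
  · intro σ _; group

/-- Image condition as an intertwining condition. -/
lemma image_eq_iff_forall {α : Type*} [Fintype α] [DecidableEq α]
    (σ : Equiv.Perm α) (T T' : Finset α) :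
    T.image σ = T' ↔ ∀ x, (σ x ∈ T') ↔ (x ∈ T) := by
  constructor
  · intro h x
    constructor
    · intro hx
      rw [← h] at hx
      obtain ⟨y, hy, hyx⟩ := Finset.mem_image.1 hx
      rwa [← σ.injective hyx]
    · intro hx; rw [← h]; exact Finset.mem_image_of_mem _ hx
  · intro h
    ext y
    rw [Finset.mem_image]
    constructor
    · rintro ⟨x, hx, rfl⟩; exact (h x).2 hx
    · intro hy
      refine ⟨σ⁻¹ y, ?_, by simp⟩
      have := h (σ⁻¹ y)
      simp only [← Equiv.Perm.mul_apply, mul_inv_cancel, Equiv.Perm.one_apply] at this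
      exact this.1 hy

/-- Binding a uniform distribution against a symmetric kernel supported on the set
gives back the uniform distribution. -/
lemma bind_uniform_symm {α : Type*} [Fintype α] (s : Finset α) (h : s.Nonempty)
    (f : α → PMF α)
    (hsupp : ∀ a ∈ s, ∀ b, b ∉ s → f a b = 0)
    (hsymm : ∀ a ∈ s, ∀ b ∈ s, f a b = f b a) :
    (PMF.uniformOfFinset s h).bind f = PMF.uniformOfFinset s h := by
  classical
  ext b
  rw [PMF.bind_apply, tsum_fintype]
  simp only [PMF.uniformOfFinset_apply]
  by_cases hb : b ∈ s
  · rw [if_pos hb]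
    have : ∀ a : α, (if a ∈ s then ((s.card : ℝ≥0∞))⁻¹ else 0) * f a b
        = if a ∈ s then ((s.card : ℝ≥0∞))⁻¹ * f b a else 0 := by
      intro a
      by_cases ha : a ∈ s
      · rw [if_pos ha, if_pos ha, hsymm a ha b hb]
      · rw [if_neg ha, if_neg ha, zero_mul]
    rw [Finset.sum_congr rfl fun a _ => this a, Finset.sum_ite_mem,
      Finset.univ_inter, ← Finset.mul_sum]
    have hsum : ∑ a ∈ s, f b a = 1 := by
      have h1 : ∑' a : α, f b a = 1 := (f b).tsum_coe
      rw [tsum_fintype] at h1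
      rw [← h1]
      refine Finset.sum_subset s.subset_univ ?_
      intro a _ ha
      exact hsupp b hb a ha
    rw [hsum, mul_one]
  · rw [if_neg hb]
    apply Finset.sum_eq_zero
    intro a _
    by_cases ha : a ∈ s
    · rw [if_pos ha, hsupp a ha b hb, mul_zero]
    · rw [if_neg ha, zero_mul]

section Shuffle

variable {n : ℕ} {i₁ i₂ : Fin n}

lemma mem_exSet {M : Matrix (Fin n) (Fin n) Bool} {j : Fin n} :
    j ∈ exSet M i₁ i₂ ↔ M i₁ j = true ∧ M i₂ j = false := by
  simp [exSet]

lemma exSet_disj {M : Matrix (Fin n) (Fin n) Bool} {j : Fin n}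
    (h1 : j ∈ exSet M i₁ i₂) (h2 : j ∈ exSet M i₂ i₁) : False := by
  rw [mem_exSet] at h1 h2
  rw [h1.1] at h2
  exact absurd h2.2 (by simp)

lemma mem_ex21_iff {M : Matrix (Fin n) (Fin n) Bool} {σ : Equiv.Perm (Fin n)}
    (hσ : (exSet M i₁ i₂).image σ = exSet M i₂ i₁) {j : Fin n} :
    j ∈ exSet M i₂ i₁ ↔ σ⁻¹ j ∈ exSet M i₁ i₂ := by
  have := (image_eq_iff_forall σ _ _).1 hσ (σ⁻¹ j)
  simp only [← Equiv.Perm.mul_apply, mul_inv_cancel, Equiv.Perm.one_apply] at this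
  exact this

variable {M : Matrix (Fin n) (Fin n) Bool} {T : Finset (Fin n)}
  {σ : Equiv.Perm (Fin n)} {ξ : Fin n → Bool}

lemma shuffle_row_ne {i : Fin n} (hi1 : i ≠ i₁) (hi2 : i ≠ i₂) (j : Fin n) :
    shuffleAt M i₁ i₂ T σ ξ i j = M i j := by
  simp [shuffleAt, hi1, hi2]

lemma shuffle_i1_mem {j : Fin n} (hj : j ∈ T) :
    shuffleAt M i₁ i₂ T σ ξ i₁ j = ξ j := by
  simp [shuffleAt, hj]

lemma shuffle_i2_mem (h12 : i₁ ≠ i₂) {j : Fin n} (hj : j ∈ T) :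
    shuffleAt M i₁ i₂ T σ ξ i₂ j = !ξ j := by
  simp [shuffleAt, hj, h12.symm]

lemma shuffle_i1_mem' {j : Fin n} (hj : σ⁻¹ j ∈ T) (hj' : j ∉ T) :
    shuffleAt M i₁ i₂ T σ ξ i₁ j = !ξ (σ⁻¹ j) := by
  simp [shuffleAt, hj, hj', show σ.symm j ∈ T from hj]

lemma shuffle_i2_mem' (h12 : i₁ ≠ i₂) {j : Fin n} (hj : σ⁻¹ j ∈ T) (hj' : j ∉ T) :
    shuffleAt M i₁ i₂ T σ ξ i₂ j = ξ (σ⁻¹ j) := by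
  simp [shuffleAt, hj, hj', h12.symm, show σ.symm j ∈ T from hj]

lemma shuffle_i1_out {j : Fin n} (hj : j ∉ T) (hj' : σ⁻¹ j ∉ T) :
    shuffleAt M i₁ i₂ T σ ξ i₁ j = M i₁ j := by
  simp [shuffleAt, hj, hj', show σ.symm j ∉ T from hj']

lemma shuffle_i2_out (h12 : i₁ ≠ i₂) {j : Fin n} (hj : j ∉ T) (hj' : σ⁻¹ j ∉ T) :
    shuffleAt M i₁ i₂ T σ ξ i₂ j = M i₂ j := by
  simp [shuffleAt, hj, hj', h12.symm, show σ.symm j ∉ T from hj']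

end Shuffle

/-- Splitting a sum over everything into two disjoint sets and the rest. -/
lemma sum_split {n : ℕ} (T T' : Finset (Fin n))
    (hdisj : ∀ x, x ∈ T → x ∈ T' → False) (h : Fin n → ℕ) :
    ∑ j, h j = ∑ j ∈ T, h j + ∑ j ∈ T', h j
      + ∑ j ∈ Finset.univ.filter (fun j => j ∉ T ∧ j ∉ T'), h j := by
  classical
  rw [← Finset.sum_filter_add_sum_filter_not Finset.univ (· ∈ T) h]
  have e1 : Finset.univ.filter (· ∈ T) = T := by ext x; simp
  rw [e1, add_assoc]
  congr 1
  rw [← Finset.sum_filter_add_sum_filter_not (Finset.univ.filter (· ∉ T)) (· ∈ T') h]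
  congr 1
  · congr 1
    ext x
    simp only [Finset.mem_filter, Finset.mem_univ, true_and]
    exact ⟨fun hx => hx.2, fun hx => ⟨fun hT => hdisj x hT hx, hx⟩⟩
  · congr 1
    rw [Finset.filter_filter]

section Main

variable {n d : ℕ} {i₁ i₂ : Fin n}

lemma mem_regSet {M : Matrix (Fin n) (Fin n) Bool} :
    M ∈ regSet n d ↔
      (∀ i, (Finset.univ.filter fun j => M i j = true).card = d) ∧
      (∀ j, (Finset.univ.filter fun i => M i j = true).card = d) := by
  simp [regSet]

/-- `|Ex(i₁,i₂)| = |Ex(i₂,i₁)|` for a regular matrix. -/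
lemma card_exSet_eq {M : Matrix (Fin n) (Fin n) Bool} (hM : M ∈ regSet n d) :
    (exSet M i₁ i₂).card = (exSet M i₂ i₁).card := by
  classical
  have h1 := (mem_regSet.1 hM).1 i₁
  have h2 := (mem_regSet.1 hM).1 i₂
  have e1 : ((Finset.univ.filter fun j => M i₁ j = true).filter fun j => M i₂ j = true).card
      + (exSet M i₁ i₂).card = d := by
    rw [← h1]
    rw [show exSet M i₁ i₂
        = (Finset.univ.filter fun j => M i₁ j = true).filter fun j => ¬ M i₂ j = true by
      ext x; simp [exSet, and_comm]]
    exact Finset.card_filter_add_card_filter_not _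
  have e2 : ((Finset.univ.filter fun j => M i₂ j = true).filter fun j => M i₁ j = true).card
      + (exSet M i₂ i₁).card = d := by
    rw [← h2]
    rw [show exSet M i₂ i₁
        = (Finset.univ.filter fun j => M i₂ j = true).filter fun j => ¬ M i₁ j = true by
      ext x; simp [exSet, and_comm]]
    exact Finset.card_filter_add_card_filter_not _
  have e3 : ((Finset.univ.filter fun j => M i₁ j = true).filter fun j => M i₂ j = true)
      = ((Finset.univ.filter fun j => M i₂ j = true).filter fun j => M i₁ j = true) := by
    ext x; simp [and_comm]
  rw [e3] at e1
  omega

/-- Shuffling preserves regularity. -/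
lemma shuffle_mem_regSet {M : Matrix (Fin n) (Fin n) Bool} (h12 : i₁ ≠ i₂)
    {σ : Equiv.Perm (Fin n)} {ξ : Fin n → Bool}
    (hM : M ∈ regSet n d) (hσ : (exSet M i₁ i₂).image σ = exSet M i₂ i₁) :
    shuffleAt M i₁ i₂ (exSet M i₁ i₂) σ ξ ∈ regSet n d := by
  classical
  set T := exSet M i₁ i₂ with hT
  set T' := exSet M i₂ i₁ with hT'
  set A := shuffleAt M i₁ i₂ T σ ξ with hA
  have hdisj : ∀ x, x ∈ T → x ∈ T' → False := fun x h1 h2 => exSet_disj h1 h2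
  have hmemT' : ∀ {j : Fin n}, j ∈ T' ↔ σ⁻¹ j ∈ T := fun {j} => mem_ex21_iff hσ
  have hcardTT' : T.card = T'.card := by
    rw [← hσ]; exact (Finset.card_image_of_injective _ σ.injective).symm
  have hrow : ∀ r₁ r₂ : Fin n, (∀ j ∈ T, A r₁ j = ξ j) → (∀ j ∈ T', A r₁ j = !ξ (σ⁻¹ j)) →
      (∀ j, j ∉ T → j ∉ T' → A r₁ j = M r₂ j) →
      (∀ j ∈ T, M r₂ j = true) → (∀ j ∈ T', M r₂ j = false) →
      (Finset.univ.filter fun j => A r₁ j = true).card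
        = (Finset.univ.filter fun j => M r₂ j = true).card := by
    intro r₁ r₂ e1 e2 e3 m1 m2
    rw [Finset.card_filter, Finset.card_filter, sum_split T T' hdisj, sum_split T T' hdisj]
    have q1 : ∑ j ∈ T', (if A r₁ j = true then 1 else 0)
        = ∑ j ∈ T, (if A r₁ (σ j) = true then 1 else 0) := by
      rw [← hσ]; exact Finset.sum_image (fun x _ y _ h => σ.injective h)
    have q2 : ∀ j ∈ T, (if A r₁ (σ j) = true then 1 else 0)
        = (if (!ξ j) = true then 1 else 0) := by
      intro j hj
      have hσj : σ j ∈ T' := by rw [← hσ]; exact Finset.mem_image_of_mem _ hj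
      rw [e2 _ hσj]
      simp
    have q3 : ∑ j ∈ T', (if M r₂ j = true then 1 else 0) = 0 :=
      Finset.sum_eq_zero fun j hj => by rw [if_neg]; simp [m2 j hj]
    have q4 : ∑ j ∈ T, (if M r₂ j = true then 1 else 0) = T.card := by
      rw [Finset.card_eq_sum_ones]
      exact Finset.sum_congr rfl fun j hj => by simp [m1 j hj]
    have q5 : ∑ j ∈ T, (if A r₁ j = true then 1 else 0)
          + ∑ j ∈ T, (if (!ξ j) = true then 1 else 0) = T.card := by
      rw [← Finset.sum_add_distrib, Finset.card_eq_sum_ones]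
      exact Finset.sum_congr rfl fun j hj => by rw [e1 _ hj]; cases hξ : ξ j <;> simp
    have q6 : ∑ j ∈ Finset.univ.filter (fun j => j ∉ T ∧ j ∉ T'),
          (if A r₁ j = true then 1 else 0)
        = ∑ j ∈ Finset.univ.filter (fun j => j ∉ T ∧ j ∉ T'),
          (if M r₂ j = true then 1 else 0) := by
      refine Finset.sum_congr rfl fun j hj => ?_
      simp only [Finset.mem_filter] at hj
      rw [e3 _ hj.2.1 hj.2.2]
    rw [q1, Finset.sum_congr rfl q2, q3, q4, q6]
    omega
  rw [mem_regSet]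
  constructor
  · -- rows
    intro i
    by_cases hc1 : i = i₁
    · rw [hc1, ← (mem_regSet.1 hM).1 i₁]
      apply hrow i₁ i₁
      · exact fun j hj => shuffle_i1_mem hj
      · exact fun j hj => shuffle_i1_mem' (hmemT'.1 hj) (fun hc => hdisj _ hc hj)
      · exact fun j hj hj' => shuffle_i1_out hj (fun hc => hj' (hmemT'.2 hc))
      · exact fun j hj => (mem_exSet.1 hj).1
      · exact fun j hj => (mem_exSet.1 hj).2
    by_cases hc2 : i = i₂
    · rw [hc2, ← (mem_regSet.1 hM).1 i₂]
      -- row i₂: entries are !ξ on T and ξ∘σ⁻¹ on T'; use hrow with ξ replaced by !ξ ∘ ·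
      have : (Finset.univ.filter fun j => A i₂ j = true).card
          = (Finset.univ.filter fun j => M i₂ j = true).card := by
        rw [Finset.card_filter, Finset.card_filter, sum_split T T' hdisj, sum_split T T' hdisj]
        have q1 : ∑ j ∈ T', (if A i₂ j = true then 1 else 0)
            = ∑ j ∈ T, (if A i₂ (σ j) = true then 1 else 0) := by
          rw [← hσ]; exact Finset.sum_image (fun x _ y _ h => σ.injective h)
        have q2 : ∀ j ∈ T, (if A i₂ (σ j) = true then 1 else 0)
            = (if ξ j = true then 1 else 0) := by
          intro j hj
          have hσj : σ j ∈ T' := by rw [← hσ]; exact Finset.mem_image_of_mem _ hj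
          have h1 : σ⁻¹ (σ j) ∈ T := by simpa using hj
          have h2 : σ j ∉ T := fun hc => hdisj _ hc hσj
          rw [hA, shuffle_i2_mem' h12 h1 h2]
          simp
        have q3 : ∑ j ∈ T, (if M i₂ j = true then 1 else 0) = 0 :=
          Finset.sum_eq_zero fun j hj => by rw [if_neg]; simp [(mem_exSet.1 hj).2]
        have q4 : ∑ j ∈ T', (if M i₂ j = true then 1 else 0) = T'.card := by
          rw [Finset.card_eq_sum_ones]
          exact Finset.sum_congr rfl fun j hj => by simp [(mem_exSet.1 hj).1]
        have q5 : ∑ j ∈ T, (if A i₂ j = true then 1 else 0)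
              + ∑ j ∈ T, (if ξ j = true then 1 else 0) = T.card := by
          rw [← Finset.sum_add_distrib, Finset.card_eq_sum_ones]
          refine Finset.sum_congr rfl fun j hj => ?_
          rw [hA, shuffle_i2_mem h12 hj]
          cases hξ : ξ j <;> simp
        have q6 : ∑ j ∈ Finset.univ.filter (fun j => j ∉ T ∧ j ∉ T'),
              (if A i₂ j = true then 1 else 0)
            = ∑ j ∈ Finset.univ.filter (fun j => j ∉ T ∧ j ∉ T'),
              (if M i₂ j = true then 1 else 0) := by
          refine Finset.sum_congr rfl fun j hj => ?_
          simp only [Finset.mem_filter] at hj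
          have hnt : σ⁻¹ j ∉ T := fun hc => hj.2.2 (hmemT'.2 hc)
          rw [hA, shuffle_i2_out h12 hj.2.1 hnt]
        rw [q1, Finset.sum_congr rfl q2, q3, q4, q6]
        omega
      exact this
    · rw [← (mem_regSet.1 hM).1 i]
      congr 1
      apply Finset.filter_congr
      intro j _
      rw [hA, shuffle_row_ne hc1 hc2]
  · -- columns
    intro j
    rw [← (mem_regSet.1 hM).2 j, Finset.card_filter, Finset.card_filter]
    have h2mem : i₂ ∈ Finset.univ.erase i₁ := by simp [Ne.symm h12]
    have dA : ∑ i, (if A i j = true then 1 else 0)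
        = (if A i₁ j = true then 1 else 0) + ((if A i₂ j = true then 1 else 0)
          + ∑ i ∈ (Finset.univ.erase i₁).erase i₂, (if A i j = true then 1 else 0)) := by
      rw [Finset.add_sum_erase (Finset.univ.erase i₁) (fun i => if A i j = true then 1 else 0)
        h2mem, Finset.add_sum_erase Finset.univ (fun i => if A i j = true then 1 else 0)
        (Finset.mem_univ i₁)]
    have dM : ∑ i, (if M i j = true then 1 else 0)
        = (if M i₁ j = true then 1 else 0) + ((if M i₂ j = true then 1 else 0)
          + ∑ i ∈ (Finset.univ.erase i₁).erase i₂, (if M i j = true then 1 else 0)) := by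
      rw [Finset.add_sum_erase (Finset.univ.erase i₁) (fun i => if M i j = true then 1 else 0)
        h2mem, Finset.add_sum_erase Finset.univ (fun i => if M i j = true then 1 else 0)
        (Finset.mem_univ i₁)]
    have hrest : ∑ i ∈ (Finset.univ.erase i₁).erase i₂, (if A i j = true then 1 else 0)
        = ∑ i ∈ (Finset.univ.erase i₁).erase i₂, (if M i j = true then 1 else 0) := by
      refine Finset.sum_congr rfl fun i hi => ?_
      simp only [Finset.mem_erase] at hi
      rw [hA, shuffle_row_ne hi.2.1 hi.1]
    have hhead : (if A i₁ j = true then 1 else 0) + (if A i₂ j = true then 1 else 0)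
        = (if M i₁ j = true then 1 else 0) + (if M i₂ j = true then 1 else 0) := by
      by_cases hjT : j ∈ T
      · have hm := mem_exSet.1 hjT
        rw [hA, shuffle_i1_mem hjT, shuffle_i2_mem h12 hjT, hm.1, hm.2]
        cases hξ : ξ j <;> simp
      · by_cases hjT' : j ∈ T'
        · have hm := mem_exSet.1 hjT'
          have h1 : σ⁻¹ j ∈ T := hmemT'.1 hjT'
          rw [hA, shuffle_i1_mem' h1 hjT, shuffle_i2_mem' h12 h1 hjT, hm.1, hm.2]
          cases hξ : ξ (σ⁻¹ j) <;> simp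
        · have hnt : σ⁻¹ j ∉ T := fun hc => hjT' (hmemT'.2 hc)
          rw [hA, shuffle_i1_out hjT hnt, shuffle_i2_out h12 hjT hnt]
    omega

/-- Reachability of `A` from `M` by a shuffle at rows `(i₁, i₂)`. -/
def Reach {n : ℕ} (i₁ i₂ : Fin n) (M A : Matrix (Fin n) (Fin n) Bool) : Prop :=
  (∀ i, i ≠ i₁ → i ≠ i₂ → ∀ j, A i j = M i j) ∧
  (∀ j, j ∉ exSet M i₁ i₂ ∪ exSet M i₂ i₁ → A i₁ j = M i₁ j ∧ A i₂ j = M i₂ j) ∧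
  (∀ j, j ∈ exSet M i₁ i₂ ∪ exSet M i₂ i₁ → A i₂ j = !A i₁ j) ∧
  (exSet A i₁ i₂).card = (exSet M i₁ i₂).card

lemma shuffle_eq_iff (h12 : i₁ ≠ i₂) {M A : Matrix (Fin n) (Fin n) Bool}
    {σ : Equiv.Perm (Fin n)} (hσ : (exSet M i₁ i₂).image σ = exSet M i₂ i₁)
    (ξ : Fin n → Bool) :
    shuffleAt M i₁ i₂ (exSet M i₁ i₂) σ ξ = A ↔
      Reach i₁ i₂ M A ∧ (∀ j ∈ exSet M i₁ i₂, ξ j = A i₁ j)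
        ∧ (∀ j ∈ exSet M i₁ i₂, A i₁ (σ j) = !(A i₁ j)) := by
  classical
  set T := exSet M i₁ i₂ with hT
  set T' := exSet M i₂ i₁ with hT'
  have hdisj : ∀ x, x ∈ T → x ∈ T' → False := fun x h1 h2 => exSet_disj h1 h2
  have hmemT' : ∀ {j : Fin n}, j ∈ T' ↔ σ⁻¹ j ∈ T := fun {j} => mem_ex21_iff hσ
  constructor
  · rintro rfl
    set A := shuffleAt M i₁ i₂ T σ ξ with hA
    have e1 : ∀ j ∈ T, A i₁ j = ξ j := fun j hj => shuffle_i1_mem hj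
    have e2 : ∀ j ∈ T, A i₂ j = !ξ j := fun j hj => shuffle_i2_mem h12 hj
    have e3 : ∀ j ∈ T', A i₁ j = !ξ (σ⁻¹ j) :=
      fun j hj => shuffle_i1_mem' (hmemT'.1 hj) (fun hc => hdisj _ hc hj)
    have e4 : ∀ j ∈ T', A i₂ j = ξ (σ⁻¹ j) :=
      fun j hj => shuffle_i2_mem' h12 (hmemT'.1 hj) (fun hc => hdisj _ hc hj)
    have e5 : ∀ j, j ∉ T → j ∉ T' → A i₁ j = M i₁ j ∧ A i₂ j = M i₂ j := by
      intro j hj hj'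
      have hnt : σ⁻¹ j ∉ T := fun hc => hj' (hmemT'.2 hc)
      exact ⟨shuffle_i1_out hj hnt, shuffle_i2_out h12 hj hnt⟩
    refine ⟨⟨fun i hi1 hi2 j => shuffle_row_ne hi1 hi2 j, ?_, ?_, ?_⟩,
      fun j hj => (e1 j hj).symm, ?_⟩
    · intro j hj
      rw [Finset.mem_union] at hj
      push_neg at hj
      exact e5 j hj.1 hj.2
    · intro j hj
      rw [Finset.mem_union] at hj
      rcases hj with hj | hj
      · rw [e1 j hj, e2 j hj]
      · rw [e3 j hj, e4 j hj, Bool.not_not]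
    · -- cardinality clause
      have hset : exSet A i₁ i₂
          = T.filter (fun j => ξ j = true) ∪ T'.filter (fun j => ξ (σ⁻¹ j) = false) := by
        ext x
        simp only [mem_exSet, Finset.mem_union, Finset.mem_filter]
        by_cases hx : x ∈ T
        · rw [e1 x hx, e2 x hx]
          constructor
          · rintro ⟨h1, _⟩; exact Or.inl ⟨hx, h1⟩
          · rintro (⟨_, h1⟩ | ⟨hx', _⟩)
            · exact ⟨h1, by rw [h1]; rfl⟩
            · exact absurd (hdisj x hx hx') (by simp)
        · by_cases hx' : x ∈ T'
          · rw [e3 x hx', e4 x hx']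
            constructor
            · rintro ⟨h1, h2⟩; exact Or.inr ⟨hx', h2⟩
            · rintro (⟨hx'', _⟩ | ⟨_, h2⟩)
              · exact absurd hx'' hx
              · exact ⟨by rw [h2]; rfl, h2⟩
          · rw [(e5 x hx hx').1, (e5 x hx hx').2]
            constructor
            · rintro ⟨h1, h2⟩; exact absurd (mem_exSet.2 ⟨h1, h2⟩) hx
            · rintro (⟨hx'', _⟩ | ⟨hx'', _⟩)
              · exact absurd hx'' hx
              · exact absurd hx'' hx'
      have hdisj2 : Disjoint (T.filter (fun j => ξ j = true))
          (T'.filter (fun j => ξ (σ⁻¹ j) = false)) :=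
        Finset.disjoint_left.2 fun a ha ha' =>
          hdisj a (Finset.mem_filter.1 ha).1 (Finset.mem_filter.1 ha').1
      rw [hset, Finset.card_union_of_disjoint hdisj2]
      have h1 : T'.filter (fun j => ξ (σ⁻¹ j) = false)
          = (T.filter fun j => ξ j = false).image σ := by
        rw [← hσ, Finset.filter_image]
        congr 1
        apply Finset.filter_congr
        intro x _
        simp
      rw [h1, Finset.card_image_of_injective _ σ.injective]
      have h2 : (T.filter fun j => ξ j = false) = (T.filter fun j => ¬ ξ j = true) := by
        apply Finset.filter_congr; intro x _; simp
      rw [h2, ← hT]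
      exact Finset.card_filter_add_card_filter_not _
    · intro j hj
      have hσj : σ j ∈ T' := by rw [← hσ]; exact Finset.mem_image_of_mem _ hj
      rw [e3 _ hσj, e1 _ hj]
      congr 1
      simp
  · rintro ⟨⟨hr1, hr2, hr3, _⟩, hξ, hσc⟩
    ext i j
    by_cases hc1 : i = i₁
    · subst hc1
      by_cases hjT : j ∈ T
      · rw [shuffle_i1_mem hjT, hξ j hjT]
      · by_cases hjT' : j ∈ T'
        · rw [shuffle_i1_mem' (hmemT'.1 hjT') hjT]
          have := hσc (σ⁻¹ j) (hmemT'.1 hjT')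
          simp only [← Equiv.Perm.mul_apply, mul_inv_cancel, Equiv.Perm.one_apply] at this
          rw [hξ _ (hmemT'.1 hjT'), this]
        · have hnt : σ⁻¹ j ∉ T := fun hc => hjT' (hmemT'.2 hc)
          rw [shuffle_i1_out hjT hnt,
            (hr2 j (by rw [Finset.mem_union]; push_neg; exact ⟨hjT, hjT'⟩)).1]
    · by_cases hc2 : i = i₂
      · subst hc2
        by_cases hjT : j ∈ T
        · rw [shuffle_i2_mem h12 hjT, hξ j hjT,
            hr3 j (Finset.mem_union_left _ hjT)]
        · by_cases hjT' : j ∈ T'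
          · rw [shuffle_i2_mem' h12 (hmemT'.1 hjT') hjT,
              hξ _ (hmemT'.1 hjT'), hr3 j (Finset.mem_union_right _ hjT')]
            have := hσc (σ⁻¹ j) (hmemT'.1 hjT')
            simp only [← Equiv.Perm.mul_apply, mul_inv_cancel, Equiv.Perm.one_apply] at this
            rw [this, Bool.not_not]
          · have hnt : σ⁻¹ j ∉ T := fun hc => hjT' (hmemT'.2 hc)
            rw [shuffle_i2_out h12 hjT hnt,
              (hr2 j (by rw [Finset.mem_union]; push_neg; exact ⟨hjT, hjT'⟩)).2]
      · rw [shuffle_row_ne hc1 hc2, hr1 i hc1 hc2]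

lemma mem_exUnion_iff {M : Matrix (Fin n) (Fin n) Bool} {x : Fin n} :
    x ∈ exSet M i₁ i₂ ∪ exSet M i₂ i₁ ↔ M i₂ x = !M i₁ x := by
  simp only [Finset.mem_union, mem_exSet]
  cases h1 : M i₁ x <;> cases h2 : M i₂ x <;> simp

/-- Under reachability the symmetric difference sets agree. -/
lemma reach_union_eq {M A : Matrix (Fin n) (Fin n) Bool} (hre : Reach i₁ i₂ M A) :
    exSet A i₁ i₂ ∪ exSet A i₂ i₁ = exSet M i₁ i₂ ∪ exSet M i₂ i₁ := by
  obtain ⟨h1, h2, h3, h4⟩ := hre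
  ext x
  rw [mem_exUnion_iff, mem_exUnion_iff]
  constructor
  · intro hx
    by_contra hc
    have hc' : x ∉ exSet M i₁ i₂ ∪ exSet M i₂ i₁ := fun hm => hc (mem_exUnion_iff.1 hm)
    obtain ⟨e1, e2⟩ := h2 x hc'
    rw [e1, e2] at hx
    exact hc hx
  · intro hx
    have := h3 x (mem_exUnion_iff.2 hx)
    exact this

lemma reach_symm {M A : Matrix (Fin n) (Fin n) Bool} (hre : Reach i₁ i₂ M A) :
    Reach i₁ i₂ A M := by
  obtain ⟨h1, h2, h3, h4⟩ := hre
  have hU := reach_union_eq (⟨h1, h2, h3, h4⟩ : Reach i₁ i₂ M A)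
  refine ⟨fun i hi1 hi2 j => (h1 i hi1 hi2 j).symm, ?_, ?_, h4.symm⟩
  · intro j hj
    rw [hU] at hj
    exact ⟨(h2 j hj).1.symm, (h2 j hj).2.symm⟩
  · intro j hj
    rw [hU] at hj
    have e3 := h3 j hj
    have hm := mem_exUnion_iff.1 hj
    by_cases hj1 : j ∈ exSet M i₁ i₂ ∪ exSet M i₂ i₁
    · exact hm
    · exact absurd hj hj1

/-- The permutation sets used in the shuffle. -/
def permSet {n : ℕ} (i₁ i₂ : Fin n) (M : Matrix (Fin n) (Fin n) Bool) :
    Finset (Equiv.Perm (Fin n)) :=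
  Finset.univ.filter fun σ : Equiv.Perm (Fin n) =>
    (exSet M i₁ i₂).image σ = exSet M i₂ i₁

/-- The constrained permutation set appearing in the fibre count. -/
def sigSet {n : ℕ} (i₁ i₂ : Fin n) (M A : Matrix (Fin n) (Fin n) Bool) :
    Finset (Equiv.Perm (Fin n)) :=
  Finset.univ.filter fun σ : Equiv.Perm (Fin n) =>
    (exSet M i₁ i₂).image σ = exSet M i₂ i₁ ∧
      ∀ j ∈ exSet M i₁ i₂, A i₁ (σ j) = !(A i₁ j)

lemma ind_card_eq {W₁ W₂ : Finset (Fin n)} (h : W₁.card = W₂.card) :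
    ∀ c : Bool, (Finset.univ.filter fun x : Fin n => decide (x ∈ W₁) = c).card
      = (Finset.univ.filter fun x : Fin n => decide (x ∈ W₂) = c).card := by
  intro c
  cases c
  · have e : ∀ W : Finset (Fin n),
        Finset.univ.filter (fun x => decide (x ∈ W) = false) = Wᶜ := by
      intro W; ext x; simp
    rw [e, e, Finset.card_compl, Finset.card_compl, h]
  · have e : ∀ W : Finset (Fin n),
        Finset.univ.filter (fun x => decide (x ∈ W) = true) = W := by
      intro W; ext x; simp
    rw [e, e, h]

lemma permSet_nonempty {M : Matrix (Fin n) (Fin n) Bool} (hM : M ∈ regSet n d) :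
    (permSet i₁ i₂ M).Nonempty := by
  obtain ⟨σ, hσ⟩ := exists_perm_comp (fun x => decide (x ∈ exSet M i₁ i₂))
    (fun x => decide (x ∈ exSet M i₂ i₁)) (ind_card_eq (card_exSet_eq hM))
  refine ⟨σ, ?_⟩
  simp only [permSet, Finset.mem_filter, Finset.mem_univ, true_and]
  rw [image_eq_iff_forall]
  intro x
  have := hσ x
  exact decide_eq_decide.1 this

set_option maxHeartbeats 1000000 in
lemma permSet_card_symm {M A : Matrix (Fin n) (Fin n) Bool}
    (hM : M ∈ regSet n d) (hA : A ∈ regSet n d) (hre : Reach i₁ i₂ M A) :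
    (permSet i₁ i₂ M).card = (permSet i₁ i₂ A).card := by
  have hTS : (exSet M i₁ i₂).card = (exSet A i₁ i₂).card := hre.2.2.2.symm
  have hT'S' : (exSet M i₂ i₁).card = (exSet A i₂ i₁).card := by
    rw [← card_exSet_eq hM, ← card_exSet_eq hA]; exact hTS
  have e : ∀ (B : Matrix (Fin n) (Fin n) Bool), permSet i₁ i₂ B
      = Finset.univ.filter fun σ : Equiv.Perm (Fin n) =>
        ∀ x, decide (σ x ∈ exSet B i₂ i₁) = decide (x ∈ exSet B i₁ i₂) := by
    intro B
    unfold permSet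
    apply Finset.filter_congr
    intro σ _
    rw [image_eq_iff_forall]
    constructor
    · intro h x; exact decide_eq_decide.2 (h x)
    · intro h x; exact decide_eq_decide.1 (h x)
  rw [e M, e A]
  have h := card_perm_inter_eq (fun x => decide (x ∈ exSet M i₁ i₂))
    (fun x => decide (x ∈ exSet M i₂ i₁)) (fun x => decide (x ∈ exSet A i₁ i₂))
    (fun x => decide (x ∈ exSet A i₂ i₁))
    (exists_perm_comp _ _ (ind_card_eq hTS))
    (exists_perm_comp _ _ (ind_card_eq hT'S'))
  convert h using 2 <;> (ext σ; simp only [Finset.mem_filter])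

lemma xi_card_eq {T S : Finset (Fin n)} (u v : Fin n → Bool)
    (h : T.card = S.card) :
    (Finset.univ.filter fun ξ : Fin n → Bool => ∀ j ∈ T, ξ j = u j).card
      = (Finset.univ.filter fun ξ : Fin n → Bool => ∀ j ∈ S, ξ j = v j).card := by
  obtain ⟨τ, hτ'⟩ := exists_perm_comp (fun x => decide (x ∈ T))
    (fun x => decide (x ∈ S)) (ind_card_eq h)
  have hτ : ∀ x, τ x ∈ S ↔ x ∈ T := fun x => decide_eq_decide.1 (hτ' x)
  apply Finset.card_bij'
    (i := fun ξ _ => fun j => if j ∈ S then v j else ξ (τ.symm j))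
    (j := fun ξ _ => fun j => if j ∈ T then u j else ξ (τ j))
  · intro ξ hξ
    simp only [Finset.mem_filter, Finset.mem_univ, true_and]
    intro j hj
    rw [if_pos hj]
  · intro ξ hξ
    simp only [Finset.mem_filter, Finset.mem_univ, true_and]
    intro j hj
    rw [if_pos hj]
  · intro ξ hξ
    simp only [Finset.mem_filter, Finset.mem_univ, true_and] at hξ
    funext j
    by_cases hj : j ∈ T
    · rw [if_pos hj, hξ j hj]
    · rw [if_neg hj]
      show (if τ j ∈ S then v (τ j) else ξ (τ.symm (τ j))) = ξ j
      rw [if_neg (fun hc => hj ((hτ j).1 hc)), Equiv.symm_apply_apply]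
  · intro ξ hξ
    simp only [Finset.mem_filter, Finset.mem_univ, true_and] at hξ
    funext j
    by_cases hj : j ∈ S
    · rw [if_pos hj, hξ j hj]
    · rw [if_neg hj]
      have h2 : τ.symm j ∉ T := by
        intro hc
        apply hj
        have := (hτ (τ.symm j)).2 hc
        rwa [Equiv.apply_symm_apply] at this
      show (if τ.symm j ∈ T then u (τ.symm j) else ξ (τ (τ.symm j))) = ξ j
      rw [if_neg h2, Equiv.apply_symm_apply]

/-- Three-valued coloring used to count constrained permutations. -/
def colF {n : ℕ} (W : Finset (Fin n)) (u : Fin n → Bool) (b : Bool) : Fin n → ℕ :=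
  fun x => if x ∈ W then (if u x = b then 0 else 1) else 2

lemma colF_fiber (W : Finset (Fin n)) (u : Fin n → Bool) (b : Bool) (c : ℕ) :
    Finset.univ.filter (fun x => colF W u b x = c)
      = if c = 0 then W.filter (fun x => u x = b)
        else if c = 1 then W.filter (fun x => ¬ u x = b)
        else if c = 2 then Wᶜ else ∅ := by
  ext x
  rw [Finset.mem_filter]
  simp only [colF, Finset.mem_filter, Finset.mem_univ, true_and]
  by_cases hx : x ∈ W
  · by_cases hu : u x = b
    · simp only [hx, hu, if_true]
      split_ifs <;> simp_all [hx, hu] <;> omega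
    · simp only [hx, hu, if_true, if_false]
      split_ifs <;> simp_all [hx, hu] <;> omega
  · simp only [hx, if_false]
    split_ifs <;> simp_all [hx] <;> omega

lemma colF_card_eq {W₁ W₂ : Finset (Fin n)} {u₁ u₂ : Fin n → Bool} {b₁ b₂ : Bool}
    (h0 : (W₁.filter fun x => u₁ x = b₁).card = (W₂.filter fun x => u₂ x = b₂).card)
    (h2 : W₁.card = W₂.card) :
    ∀ c, (Finset.univ.filter fun x => colF W₁ u₁ b₁ x = c).card
      = (Finset.univ.filter fun x => colF W₂ u₂ b₂ x = c).card := by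
  intro c
  rw [colF_fiber, colF_fiber]
  have h1 : (W₁.filter fun x => ¬ u₁ x = b₁).card = (W₂.filter fun x => ¬ u₂ x = b₂).card := by
    have a1 := Finset.card_filter_add_card_filter_not
      (s := W₁) (p := fun x => u₁ x = b₁)
    have a2 := Finset.card_filter_add_card_filter_not
      (s := W₂) (p := fun x => u₂ x = b₂)
    omega
  split_ifs
  · exact h0
  · exact h1
  · rw [Finset.card_compl, Finset.card_compl, h2]
  · rfl

lemma sig_cond_iff {M A : Matrix (Fin n) (Fin n) Bool} {σ : Equiv.Perm (Fin n)} :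
    σ ∈ sigSet i₁ i₂ M A ↔
      ∀ x, colF (exSet M i₂ i₁) (A i₁) false (σ x) = colF (exSet M i₁ i₂) (A i₁) true x := by
  set T := exSet M i₁ i₂ with hT
  set T' := exSet M i₂ i₁ with hT'
  simp only [sigSet, Finset.mem_filter, Finset.mem_univ, true_and]
  constructor
  · rintro ⟨him, hcond⟩ x
    have hiff := (image_eq_iff_forall σ T T').1 him
    by_cases hx : x ∈ T
    · have hσx : σ x ∈ T' := (hiff x).2 hx
      simp only [colF, if_pos hx, if_pos hσx]
      by_cases hu : A i₁ x = true
      · rw [if_pos hu, if_pos]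
        rw [hcond x hx, hu]
        rfl
      · rw [if_neg hu, if_neg]
        rw [hcond x hx]
        simp only [Bool.not_eq_true] at hu
        rw [hu]
        simp
    · have hσx : σ x ∉ T' := fun hc => hx ((hiff x).1 hc)
      simp only [colF, if_neg hx, if_neg hσx]
  · intro h
    have him : T.image σ = T' := by
      rw [image_eq_iff_forall]
      intro x
      constructor
      · intro hσx
        by_contra hx
        have := h x
        simp only [colF, if_neg hx, if_pos hσx] at this
        split_ifs at this <;> omega
      · intro hx
        by_contra hσx
        have := h x
        simp only [colF, if_pos hx, if_neg hσx] at this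
        split_ifs at this <;> omega
    refine ⟨him, ?_⟩
    intro j hj
    have hσj : σ j ∈ T' := by
      rw [← him]; exact Finset.mem_image_of_mem _ hj
    have := h j
    simp only [colF, if_pos hj, if_pos hσj] at this
    by_cases hu : A i₁ j = true
    · rw [if_pos hu] at this
      rw [hu]
      by_cases h2 : A i₁ (σ j) = false
      · rw [h2]; rfl
      · rw [if_neg h2] at this
        rw [if_pos hj] at this; omega
    · rw [if_neg hu] at this
      simp only [Bool.not_eq_true] at hu
      rw [hu]
      by_cases h2 : A i₁ (σ j) = false
      · rw [if_pos h2] at this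
        rw [if_pos hj] at this; omega
      · simp only [Bool.not_eq_false] at h2
        rw [h2]
        rfl

lemma sigSet_card_symm {M A : Matrix (Fin n) (Fin n) Bool}
    (hM : M ∈ regSet n d) (hA : A ∈ regSet n d) (hre : Reach i₁ i₂ M A) :
    (sigSet i₁ i₂ M A).card = (sigSet i₁ i₂ A M).card := by
  set T := exSet M i₁ i₂ with hT
  set T' := exSet M i₂ i₁ with hT'
  set S := exSet A i₁ i₂ with hS
  set S' := exSet A i₂ i₁ with hS'
  have hre' : Reach i₁ i₂ A M := reach_symm hre
  have hU := reach_union_eq hre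
  have hTS : T.card = S.card := hre.2.2.2.symm
  have hT'S' : T'.card = S'.card := by
    rw [← card_exSet_eq hM, ← card_exSet_eq hA]; exact hTS
  -- fiber set identifications
  have e1 : T.filter (fun x => A i₁ x = true) = T ∩ S := by
    ext x
    simp only [Finset.mem_filter, Finset.mem_inter]
    constructor
    · rintro ⟨hx, h1⟩
      refine ⟨hx, mem_exSet.2 ⟨h1, ?_⟩⟩
      rw [hre.2.2.1 x (Finset.mem_union_left _ hx), h1]
      rfl
    · rintro ⟨hx, hxS⟩
      exact ⟨hx, (mem_exSet.1 hxS).1⟩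
  have e2 : S.filter (fun x => M i₁ x = true) = S ∩ T := by
    ext x
    simp only [Finset.mem_filter, Finset.mem_inter]
    constructor
    · rintro ⟨hx, h1⟩
      refine ⟨hx, ?_⟩
      have hxU : x ∈ T ∪ T' := by
        rw [← hU]; exact Finset.mem_union_left _ hx
      rcases Finset.mem_union.1 hxU with h | h
      · exact h
      · exact absurd h1 (by rw [(mem_exSet.1 h).2]; simp)
    · rintro ⟨hx, hxT⟩
      exact ⟨hx, (mem_exSet.1 hxT).1⟩
  have e3 : T'.filter (fun x => A i₁ x = false) = T' ∩ S' := by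
    ext x
    simp only [Finset.mem_filter, Finset.mem_inter]
    constructor
    · rintro ⟨hx, h1⟩
      refine ⟨hx, mem_exSet.2 ⟨?_, h1⟩⟩
      rw [hre.2.2.1 x (Finset.mem_union_right _ hx), h1]
      rfl
    · rintro ⟨hx, hxS⟩
      exact ⟨hx, (mem_exSet.1 hxS).2⟩
  have e4 : S'.filter (fun x => M i₁ x = false) = S' ∩ T' := by
    ext x
    simp only [Finset.mem_filter, Finset.mem_inter]
    constructor
    · rintro ⟨hx, h1⟩
      refine ⟨hx, ?_⟩
      have hxU : x ∈ T ∪ T' := by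
        rw [← hU]; exact Finset.mem_union_right _ hx
      rcases Finset.mem_union.1 hxU with h | h
      · exact absurd h1 (by rw [(mem_exSet.1 h).1]; simp)
      · exact h
    · rintro ⟨hx, hxT⟩
      exact ⟨hx, (mem_exSet.1 hxT).2⟩
  have h0f : (T.filter fun x => A i₁ x = true).card
      = (S.filter fun x => M i₁ x = true).card := by
    rw [e1, e2, Finset.inter_comm]
  have h0g : (T'.filter fun x => A i₁ x = false).card
      = (S'.filter fun x => M i₁ x = false).card := by
    rw [e3, e4, Finset.inter_comm]
  -- now apply the generic counting lemma
  have eM : sigSet i₁ i₂ M A = Finset.univ.filter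
      (fun σ : Equiv.Perm (Fin n) =>
        ∀ x, colF T' (A i₁) false (σ x) = colF T (A i₁) true x) := by
    ext σ
    rw [Finset.mem_filter]
    constructor
    · intro hσ; exact ⟨Finset.mem_univ _, sig_cond_iff.1 hσ⟩
    · intro hσ; exact sig_cond_iff.2 hσ.2
  have eA : sigSet i₁ i₂ A M = Finset.univ.filter
      (fun σ : Equiv.Perm (Fin n) =>
        ∀ x, colF S' (M i₁) false (σ x) = colF S (M i₁) true x) := by
    ext σ
    rw [Finset.mem_filter]
    constructor
    · intro hσ; exact ⟨Finset.mem_univ _, sig_cond_iff.1 hσ⟩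
    · intro hσ; exact sig_cond_iff.2 hσ.2
  rw [eM, eA]
  have h := card_perm_inter_eq (colF T (A i₁) true) (colF T' (A i₁) false)
    (colF S (M i₁) true) (colF S' (M i₁) false)
    (exists_perm_comp _ _ (colF_card_eq h0f hTS))
    (exists_perm_comp _ _ (colF_card_eq h0g hT'S'))
  convert h using 2 <;> (ext σ; simp only [Finset.mem_filter])

set_option maxHeartbeats 3200000 in
lemma kernel_apply (h12 : i₁ ≠ i₂) {M : Matrix (Fin n) (Fin n) Bool}
    (hM : M ∈ regSet n d) (A : Matrix (Fin n) (Fin n) Bool) :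
    ((uniformOn (Finset.univ.filter fun σ : Equiv.Perm (Fin n) =>
          (exSet M i₁ i₂).image σ = exSet M i₂ i₁) (Equiv.refl (Fin n))).bind fun σ =>
        (PMF.uniformOfFintype (Fin n → Bool)).map fun ξ =>
          shuffleAt M i₁ i₂ (exSet M i₁ i₂) σ ξ) A
    = (if Reach i₁ i₂ M A then
        ((sigSet i₁ i₂ M A).card : ℝ≥0∞) *
          ((Finset.univ.filter fun ξ : Fin n → Bool =>
            ∀ j ∈ exSet M i₁ i₂, ξ j = A i₁ j).card : ℝ≥0∞)
      else 0)
      * ((permSet i₁ i₂ M).card : ℝ≥0∞)⁻¹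
      * ((Fintype.card (Fin n → Bool) : ℝ≥0∞))⁻¹ := by
  classical
  have hne : (Finset.univ.filter fun σ : Equiv.Perm (Fin n) =>
      (exSet M i₁ i₂).image σ = exSet M i₂ i₁).Nonempty := permSet_nonempty hM
  have hcount : ∀ σ : Equiv.Perm (Fin n), (exSet M i₁ i₂).image σ = exSet M i₂ i₁ →
      (Finset.univ.filter fun ξ : Fin n → Bool =>
        A = shuffleAt M i₁ i₂ (exSet M i₁ i₂) σ ξ).card
      = if Reach i₁ i₂ M A ∧ (∀ j ∈ exSet M i₁ i₂, A i₁ (σ j) = !(A i₁ j))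
        then (Finset.univ.filter fun ξ : Fin n → Bool =>
          ∀ j ∈ exSet M i₁ i₂, ξ j = A i₁ j).card
        else 0 := by
    intro σ hσ'
    split_ifs with h
    · congr 1
      ext ξ
      simp only [Finset.mem_filter, Finset.mem_univ, true_and]
      rw [eq_comm, shuffle_eq_iff h12 hσ']
      constructor
      · rintro ⟨_, hξ, _⟩ j hj; exact (hξ j hj) ▸ rfl
      · intro hξ; exact ⟨h.1, fun j hj => hξ j hj, h.2⟩
    · rw [Finset.card_eq_zero, Finset.eq_empty_iff_forall_notMem]
      intro ξ hξ
      rw [Finset.mem_filter] at hξ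
      obtain ⟨hre, _, hσc⟩ := (shuffle_eq_iff h12 hσ' ξ).1 hξ.2.symm
      exact h ⟨hre, hσc⟩
  rw [uniformOn, dif_pos hne, PMF.bind_apply, tsum_fintype]
  simp only [PMF.map_apply, tsum_fintype, PMF.uniformOfFintype_apply,
    PMF.uniformOfFinset_apply, ← Finset.sum_filter, Finset.sum_const, nsmul_eq_mul,
    Finset.filter_congr_decidable]
  set c : ℝ≥0∞ := ((Fintype.card (Fin n → Bool) : ℝ≥0∞))⁻¹ with hc
  trans (∑ σ : Equiv.Perm (Fin n),
      if σ ∈ sigSet i₁ i₂ M A ∧ Reach i₁ i₂ M A then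
        ((permSet i₁ i₂ M).card : ℝ≥0∞)⁻¹ *
          (((Finset.univ.filter fun ξ : Fin n → Bool =>
            ∀ j ∈ exSet M i₁ i₂, ξ j = A i₁ j).card : ℝ≥0∞) * c)
      else 0)
  · refine Finset.sum_congr rfl fun σ _ => ?_
    by_cases hσ : σ ∈ (Finset.univ.filter fun σ : Equiv.Perm (Fin n) =>
        (exSet M i₁ i₂).image σ = exSet M i₂ i₁)
    · rw [if_pos hσ, hcount σ (Finset.mem_filter.1 hσ).2]
      by_cases h : Reach i₁ i₂ M A ∧ (∀ j ∈ exSet M i₁ i₂, A i₁ (σ j) = !(A i₁ j))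
      · rw [if_pos h, if_pos]
        · rfl
        · refine ⟨?_, h.1⟩
          simp only [sigSet, Finset.mem_filter, Finset.mem_univ, true_and]
          exact ⟨(Finset.mem_filter.1 hσ).2, h.2⟩
      · rw [if_neg h, if_neg]
        · simp
        · rintro ⟨hsig, hre⟩
          simp only [sigSet, Finset.mem_filter, Finset.mem_univ, true_and] at hsig
          exact h ⟨hre, hsig.2⟩
    · rw [if_neg hσ, zero_mul, if_neg]
      rintro ⟨hsig, _⟩
      simp only [sigSet, Finset.mem_filter, Finset.mem_univ, true_and] at hsig
      exact hσ (by simp only [Finset.mem_filter, Finset.mem_univ, true_and]; exact hsig.1)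
  · rw [← Finset.sum_filter, Finset.sum_const, nsmul_eq_mul]
    by_cases hre : Reach i₁ i₂ M A
    · rw [if_pos hre]
      have hfeq : (Finset.univ.filter fun σ : Equiv.Perm (Fin n) =>
          σ ∈ sigSet i₁ i₂ M A ∧ Reach i₁ i₂ M A) = sigSet i₁ i₂ M A := by
        ext σ
        simp only [Finset.mem_filter, Finset.mem_univ, true_and]
        exact ⟨fun h => h.1, fun h => ⟨h, hre⟩⟩
      rw [hfeq]
      ring
    · rw [if_neg hre]
      have hfeq : (Finset.univ.filter fun σ : Equiv.Perm (Fin n) =>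
          σ ∈ sigSet i₁ i₂ M A ∧ Reach i₁ i₂ M A) = ∅ := by
        rw [Finset.eq_empty_iff_forall_notMem]
        intro σ hσ
        exact hre (Finset.mem_filter.1 hσ).2.2
      rw [hfeq]
      simp

end Main

/-- **Shuffling coupling.**  Let `M` be uniform on `M_{n,d}` and `i₁ ≠ i₂`.
Conditional on `M`, let `π : Ex_M(i₁,i₂) → Ex_M(i₂,i₁)` be a uniform random bijection
(encoded as a uniform random permutation `σ` of `[n]` mapping `Ex_M(i₁,i₂)` onto
`Ex_M(i₂,i₁)`), and let `ξ` be iid uniform signs independent of everything else.  Then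
the shuffled matrix `M̃` is again uniform on `M_{n,d}`. -/
theorem shuffling_coupling (n d : ℕ) (hd : 1 ≤ d ∧ d ≤ n)
    (i₁ i₂ : Fin n) (h12 : i₁ ≠ i₂) (hreg : (regSet n d).Nonempty) :
    ((PMF.uniformOfFinset (regSet n d) hreg).bind fun M =>
      (uniformOn (Finset.univ.filter fun σ : Equiv.Perm (Fin n) =>
          (exSet M i₁ i₂).image σ = exSet M i₂ i₁) (Equiv.refl (Fin n))).bind fun σ =>
        (PMF.uniformOfFintype (Fin n → Bool)).map fun ξ =>
          shuffleAt M i₁ i₂ (exSet M i₁ i₂) σ ξ)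
    = PMF.uniformOfFinset (regSet n d) hreg := by
  classical
  apply bind_uniform_symm
  · intro M hM A hA
    rw [kernel_apply h12 hM A]
    by_cases hre : Reach i₁ i₂ M A
    · rw [if_pos hre]
      have hsig : (sigSet i₁ i₂ M A) = ∅ := by
        rw [Finset.eq_empty_iff_forall_notMem]
        intro σ hσ
        simp only [sigSet, Finset.mem_filter, Finset.mem_univ, true_and] at hσ
        have heq := (shuffle_eq_iff h12 hσ.1 (fun j => A i₁ j)).2
          ⟨hre, fun j _ => rfl, hσ.2⟩
        exact hA (heq ▸ shuffle_mem_regSet h12 hM hσ.1)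
      rw [hsig]
      simp
    · rw [if_neg hre]
      simp
  · intro M hM A hA
    rw [kernel_apply h12 hM A, kernel_apply h12 hA M]
    by_cases hre : Reach i₁ i₂ M A
    · have hre' : Reach i₁ i₂ A M := reach_symm hre
      rw [if_pos hre, if_pos hre', sigSet_card_symm hM hA hre,
        xi_card_eq (A i₁) (M i₁) hre.2.2.2.symm, permSet_card_symm hM hA hre]
    · rw [if_neg hre, if_neg (fun hc => hre (reach_symm hc))]
      simp


end
end
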